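/- arXiv:2303.01969 — 3 statements merged into one kernel-verified Lean document; each statement's English description precedes it below -/
import Mathlib

section
/- Let F be a family of non-decreasing functions [0,∞) → [0,∞), let X and Y be 1-uniformly discrete metric spaces, and let f : X → Y be a Lipschitz map such that for every R > 0 and every r > 0 there exists an F-growing collection 𝒲 of subsets of X with the property that for every subset A ⊆ Y with diam(A) ≤ R, the preimage f⁻¹(A) is a disjoint union of members of 𝒲 any two of which are at distance ≥ r. Then ov-asdim_F(X) ≤ asdim(Y). -/
open Metric Set

/-- A metric space is 1-uniformly discrete. -/
def UnifDiscrete (X : Type*) [MetricSpace X] : Prop :=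
  ∀ x y : X, x ≠ y → 1 ≤ dist x y

/-- Bounded geometry: balls of each radius have uniformly bounded cardinality. -/
def BddGeom (X : Type*) [MetricSpace X] : Prop :=
  ∀ R : ℝ, ∃ N : ℕ, ∀ (x : X) (s : Finset X), ↑s ⊆ Metric.closedBall x R → s.card ≤ N

/-- A regular map between metric spaces. -/
def IsRegularMap {X Y : Type*} [MetricSpace X] [MetricSpace Y] (f : X → Y) : Prop :=
  ∃ κ : ℕ, 1 ≤ κ ∧ (∀ x x' : X, dist (f x) (f x') ≤ κ * (1 + dist x x')) ∧
    ∀ y : Y, ∃ c : Finset X, c.card ≤ κ ∧ f ⁻¹' Metric.ball y 1 ⊆ ⋃ x ∈ c, Metric.ball x 1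

/-- A quasi-isometric embedding. -/
def IsQIEmbedding {X Y : Type*} [MetricSpace X] [MetricSpace Y] (f : X → Y) : Prop :=
  ∃ L D : ℝ, 1 ≤ L ∧ 0 ≤ D ∧ ∀ x x' : X,
    L⁻¹ * dist x x' - D ≤ dist (f x) (f x') ∧ dist (f x) (f x') ≤ L * dist x x' + D

/-- A coarse Lipschitz map. -/
def CoarseLipschitz {X Y : Type*} [MetricSpace X] [MetricSpace Y] (f : X → Y) : Prop :=
  ∃ K : ℝ, 1 ≤ K ∧ ∀ x x' : X, dist (f x) (f x') ≤ K * dist x x' + K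

/-- The metric of `T` is the graph metric of a 3-regular tree. -/
def IsCubicTreeMetric (T : Type*) [MetricSpace T] : Prop :=
  ∃ G : SimpleGraph T, G.Connected ∧ G.IsAcyclic ∧
    (∀ v : T, (G.neighborSet v).ncard = 3) ∧
    ∀ u v : T, dist u v = (G.dist u v : ℝ)

/-- The metric of `Z` is the graph metric of a connected graph of uniformly bounded degree. -/
def IsBddDegGraphMetric (Z : Type*) [MetricSpace Z] : Prop :=
  ∃ G : SimpleGraph Z, G.Connected ∧
    (∃ D : ℕ, ∀ v : Z, (G.neighborSet v).ncard ≤ D) ∧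
    ∀ u v : Z, dist u v = (G.dist u v : ℝ)

/-- A non-decreasing subexponential function `[0,∞) → [0,∞)`. -/
def SubexpFun (g : ℝ → ℝ) : Prop :=
  MonotoneOn g (Set.Ici 0) ∧ (∀ r : ℝ, 0 ≤ g r) ∧
    Filter.Tendsto (fun r => Real.log (g r) / r) Filter.atTop (nhds 0)

/-- Every ball of radius `r` in `Z` contains at most `g r` points. -/
def HasGrowthBound (Z : Type*) [MetricSpace Z] (g : ℝ → ℝ) : Prop :=
  ∀ (z : Z) (r : ℝ), 0 ≤ r → ∀ s : Finset Z, ↑s ⊆ Metric.closedBall z r → (s.card : ℝ) ≤ g r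

def HasSubexpGrowth (Z : Type*) [MetricSpace Z] : Prop :=
  ∃ g : ℝ → ℝ, SubexpFun g ∧ HasGrowthBound Z g

def HasPolyGrowth (Z : Type*) [MetricSpace Z] : Prop :=
  ∃ (C : ℝ) (d : ℕ), 1 ≤ C ∧ HasGrowthBound Z (fun r => C * r ^ d + C)

/-- Distinct members of the family are at distance at least `r` from each other. -/
def SepFamily {X : Type*} [MetricSpace X] (r : ℝ) (𝒰 : Set (Set X)) : Prop :=
  ∀ U ∈ 𝒰, ∀ V ∈ 𝒰, U ≠ V → ∀ x ∈ U, ∀ y ∈ V, r ≤ dist x y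

/-- A decomposition of `X` into `n+1` colours of `r`-separated pieces. -/
def Decomp {X : Type*} [MetricSpace X] (n : ℕ) (r : ℝ) (𝒰 : Fin (n+1) → Set (Set X)) : Prop :=
  (∀ x : X, ∃ i, ∃ U ∈ 𝒰 i, x ∈ U) ∧ ∀ i, SepFamily r (𝒰 i)

/-- A collection of subsets of `X` has growth uniformly controlled by the family `F`. -/
def FGrowing {X : Type*} [MetricSpace X] (F : Set (ℝ → ℝ)) (𝒰 : Set (Set X)) : Prop :=
  ∃ f ∈ F, ∃ C : ℝ, 1 ≤ C ∧ ∀ U ∈ 𝒰, ∀ (x : X) (r : ℝ), 0 ≤ r →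
    ∀ s : Finset X, ↑s ⊆ U ∩ Metric.closedBall x r → (s.card : ℝ) ≤ C * f (C * r) + C

/-- `asdim_F X ≤ n`. -/
def AsdimLE (F : Set (ℝ → ℝ)) (X : Type*) [MetricSpace X] (n : ℕ) : Prop :=
  ∀ r : ℝ, 0 < r → ∃ 𝒰 : Fin (n+1) → Set (Set X),
    Decomp n r 𝒰 ∧ FGrowing F (⋃ i, 𝒰 i)

/-- Iterated neighbourhoods `N^m_s(Y)` of `Y` with respect to the collection `𝒴`. -/
def iterNbhd {X : Type*} [MetricSpace X] (𝒴 : Set (Set X)) (s : ℝ) : ℕ → Set X → Set X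
  | 0, Y => Y
  | m + 1, Y => ⋃₀ {Y' | Y' ∈ 𝒴 ∧ ∃ x ∈ Y', ∃ z ∈ iterNbhd 𝒴 s m Y, dist x z ≤ s}

/-- `ov-asdim_F X ≤ n`. -/
def OvAsdimLE (F : Set (ℝ → ℝ)) (X : Type*) [MetricSpace X] (n : ℕ) : Prop :=
  ∀ r : ℝ, 0 < r → ∃ 𝒰 : Fin (n+1) → Set (Set X),
    Decomp n r 𝒰 ∧ ∀ s : ℝ, 1 ≤ s → ∀ m : ℕ,
      FGrowing F ((iterNbhd (⋃ i, 𝒰 i) s m) '' (⋃ i, 𝒰 i))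

/-- A family of non-decreasing functions `[0,∞) → [0,∞)`. -/
def NondecrFamily (F : Set (ℝ → ℝ)) : Prop :=
  ∀ f ∈ F, MonotoneOn f (Set.Ici 0) ∧ ∀ r : ℝ, 0 ≤ r → 0 ≤ f r

/-- The family of non-decreasing subexponential functions. -/
def seFamily : Set (ℝ → ℝ) := {g | SubexpFun g}

/-- The family of non-decreasing functions bounded by `C·r^d + C`. -/
def polyFamily (d : ℕ) : Set (ℝ → ℝ) :=
  {f | MonotoneOn f (Set.Ici 0) ∧ (∀ r : ℝ, 0 ≤ f r) ∧
    ∃ C : ℝ, 0 < C ∧ ∀ r : ℝ, 0 ≤ r → f r ≤ C * r ^ d + C}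

/-- `asdim X ≤ n` : classical asymptotic dimension. -/
def ClassicalAsdimLE (X : Type*) [MetricSpace X] (n : ℕ) : Prop :=
  ∀ r : ℝ, 0 < r → ∃ 𝒰 : Fin (n+1) → Set (Set X), Decomp n r 𝒰 ∧
    ∃ B : ℝ, ∀ U ∈ ⋃ i, 𝒰 i, ∀ x ∈ U, ∀ y ∈ U, dist x y ≤ B

section AuxChain

variable {X : Type*} [MetricSpace X]

/-- One step of an `r`-chain inside a set `W`. -/
def chainRel (W : Set X) (r : ℝ) (a b : X) : Prop :=
  a ∈ W ∧ b ∈ W ∧ dist a b ≤ r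

theorem chainRel_symm (W : Set X) (r : ℝ) : Symmetric (chainRel W r) :=
  fun _ _ ⟨ha, hb, hd⟩ => ⟨hb, ha, by rwa [dist_comm]⟩

/-- The `r`-chain-connected component of `x` inside `W`. -/
def chainComp (W : Set X) (r : ℝ) (x : X) : Set X :=
  {y | Relation.ReflTransGen (chainRel W r) x y}

theorem self_mem_chainComp (W : Set X) (r : ℝ) (x : X) : x ∈ chainComp W r x :=
  Relation.ReflTransGen.refl

theorem chainComp_subset {W : Set X} {r : ℝ} {x : X} (hx : x ∈ W) :
    chainComp W r x ⊆ W := by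
  intro y hy
  have hy' : Relation.ReflTransGen (chainRel W r) x y := hy
  induction hy' with
  | refl => exact hx
  | tail _ h _ => exact h.2.1

theorem chainComp_eq_of_rel {W : Set X} {r : ℝ} {x₁ x₂ : X}
    (h : Relation.ReflTransGen (chainRel W r) x₁ x₂) :
    chainComp W r x₁ = chainComp W r x₂ := by
  ext z
  exact ⟨fun hz => ((@Std.Symm.symm _ _ (@Relation.ReflTransGen.symmetric _ (chainRel W r) ⟨fun _ _ h => chainRel_symm W r h⟩) _ _ h)).trans hz,
    fun hz => h.trans hz⟩

theorem rtg_of_mem_chainComp {W : Set X} {r : ℝ} {x u v : X}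
    (hu : u ∈ chainComp W r x) (hv : v ∈ chainComp W r x) :
    Relation.ReflTransGen (chainRel W r) u v :=
  ((@Std.Symm.symm _ _ (@Relation.ReflTransGen.symmetric _ (chainRel W r) ⟨fun _ _ h => chainRel_symm W r h⟩) _ _ hu)).trans hv

/-- A chain with steps `≤ r < t` inside `⋃₀ 𝒞`, where distinct members of `𝒞` are
`t`-separated, cannot pass from one member of `𝒞` to another. -/
theorem same_piece {𝒞 : Set (Set X)} {t r : ℝ} (ht : 0 < t) (hrt : r < t)
    (hsep : SepFamily t 𝒞) {W : Set X} (hW : W ⊆ ⋃₀ 𝒞) {p q : X}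
    (h : Relation.ReflTransGen (chainRel W r) p q) :
    ∀ U ∈ 𝒞, p ∈ U → ∀ V ∈ 𝒞, q ∈ V → U = V := by
  induction h with
  | refl =>
    intro U hU hpU V hV hpV
    by_contra hne
    have := hsep U hU V hV hne _ hpU _ hpV
    rw [dist_self] at this
    linarith
  | @tail b c h₁ h₂ ih =>
    intro U hU hpU V hV hqV
    obtain ⟨Wb, hWb, hbWb⟩ := hW h₂.1
    have hUWb : U = Wb := ih U hU hpU Wb hWb hbWb
    by_contra hne
    have hWbV : Wb ≠ V := by rw [← hUWb]; exact hne
    have := hsep Wb hWb V hV hWbV _ hbWb _ hqV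
    linarith [h₂.2.2]

end AuxChain

/-- **fibering property.** If `f : X → Y` is Lipschitz and preimages of
uniformly bounded subsets of `Y` decompose in an `F`-controlled way, then
`ov-asdim_F(X) ≤ asdim(Y)`. -/
theorem ov_asdim_le_of_fibering
    (F : Set (ℝ → ℝ)) (hF : NondecrFamily F)
    (X Y : Type*) [MetricSpace X] [MetricSpace Y]
    (hX : UnifDiscrete X) (hY : UnifDiscrete Y)
    (f : X → Y) (L : ℝ) (hL : 0 ≤ L)
    (hf : ∀ x x' : X, dist (f x) (f x') ≤ L * dist x x')
    (hfib : ∀ R : ℝ, 0 < R → ∀ r : ℝ, 0 < r → ∃ 𝒲 : Set (Set X), FGrowing F 𝒲 ∧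
      ∀ A : Set Y, (∀ a ∈ A, ∀ b ∈ A, dist a b ≤ R) →
        ∃ 𝒞 ⊆ 𝒲, f ⁻¹' A = ⋃₀ 𝒞 ∧ SepFamily r 𝒞)
    (n : ℕ) (hYdim : ClassicalAsdimLE Y n) :
    OvAsdimLE F X n := by
  classical
  intro r hr
  set L' : ℝ := max L 1 with hL'def
  have hL'1 : (1:ℝ) ≤ L' := le_max_right _ _
  have hLL' : L ≤ L' := le_max_left _ _
  have hL'pos : (0:ℝ) < L' := lt_of_lt_of_le one_pos hL'1
  obtain ⟨𝒱, h𝒱dec, B, hB⟩ := hYdim (L' * r) (by positivity)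
  set BR : ℝ := max B 1 with hBRdef
  have hBR1 : (1:ℝ) ≤ BR := le_max_right _ _
  have hBBR : B ≤ BR := le_max_left _ _
  obtain ⟨𝒲₀, h𝒲₀grow, hdec₀⟩ := hfib BR (lt_of_lt_of_le one_pos hBR1) r hr
  have key : ∀ A : Set Y, ∃ 𝒟 : Set (Set X),
      A ∈ (⋃ i, 𝒱 i) → 𝒟 ⊆ 𝒲₀ ∧ f ⁻¹' A = ⋃₀ 𝒟 ∧ SepFamily r 𝒟 := by
    intro A
    by_cases hA : A ∈ ⋃ i, 𝒱 i
    · obtain ⟨𝒟, h1, h2, h3⟩ := hdec₀ A (fun a ha b hb => (hB A hA a ha b hb).trans hBBR)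
      exact ⟨𝒟, fun _ => ⟨h1, h2, h3⟩⟩
    · exact ⟨∅, fun h => absurd h hA⟩
  choose 𝒞 h𝒞 using key
  set 𝒰 : Fin (n+1) → Set (Set X) :=
    fun i => {T | ∃ A ∈ 𝒱 i, ∃ W ∈ 𝒞 A, ∃ x₀ ∈ W, T = chainComp W r x₀} with h𝒰def
  have h𝒰mem : ∀ (i : Fin (n+1)) (T : Set X), T ∈ 𝒰 i ↔
      ∃ A ∈ 𝒱 i, ∃ W ∈ 𝒞 A, ∃ x₀ ∈ W, T = chainComp W r x₀ := by
    intro i T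
    rw [h𝒰def]
    exact Iff.rfl
  have hmem𝒴 : ∀ T ∈ ⋃ i, 𝒰 i,
      ∃ A ∈ ⋃ i, 𝒱 i, ∃ W ∈ 𝒞 A, ∃ x₀ ∈ W, T = chainComp W r x₀ := by
    intro T hT
    obtain ⟨i, hi⟩ := mem_iUnion.mp hT
    obtain ⟨A, hA, W, hW, x₀, hx₀, rfl⟩ := (h𝒰mem i T).mp hi
    exact ⟨A, mem_iUnion.mpr ⟨i, hA⟩, W, hW, x₀, hx₀, rfl⟩
  refine ⟨𝒰, ⟨?_, ?_⟩, ?_⟩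
  · -- cover
    intro x
    obtain ⟨i, A, hAi, hfxA⟩ := h𝒱dec.1 (f x)
    have hAmem : A ∈ ⋃ i, 𝒱 i := mem_iUnion.mpr ⟨i, hAi⟩
    have hx : x ∈ ⋃₀ 𝒞 A := by rw [← (h𝒞 A hAmem).2.1]; exact hfxA
    obtain ⟨W, hW, hxW⟩ := hx
    exact ⟨i, chainComp W r x, (h𝒰mem i _).mpr ⟨A, hAi, W, hW, x, hxW, rfl⟩,
      self_mem_chainComp W r x⟩
  · -- separation
    intro i T₁ hT₁ T₂ hT₂ hne p hp q hq
    obtain ⟨A₁, hA₁, W₁, hW₁, x₁, hx₁, rfl⟩ := (h𝒰mem i T₁).mp hT₁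
    obtain ⟨A₂, hA₂, W₂, hW₂, x₂, hx₂, rfl⟩ := (h𝒰mem i T₂).mp hT₂
    have hA₁m : A₁ ∈ ⋃ i, 𝒱 i := mem_iUnion.mpr ⟨i, hA₁⟩
    have hA₂m : A₂ ∈ ⋃ i, 𝒱 i := mem_iUnion.mpr ⟨i, hA₂⟩
    have hpW₁ : p ∈ W₁ := chainComp_subset hx₁ hp
    have hqW₂ : q ∈ W₂ := chainComp_subset hx₂ hq
    have hpA₁ : f p ∈ A₁ := by
      have : p ∈ f ⁻¹' A₁ := by rw [(h𝒞 A₁ hA₁m).2.1]; exact ⟨W₁, hW₁, hpW₁⟩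
      exact this
    have hqA₂ : f q ∈ A₂ := by
      have : q ∈ f ⁻¹' A₂ := by rw [(h𝒞 A₂ hA₂m).2.1]; exact ⟨W₂, hW₂, hqW₂⟩
      exact this
    by_cases hAeq : A₁ = A₂
    · subst hAeq
      by_cases hWeq : W₁ = W₂
      · subst hWeq
        by_contra hlt
        push_neg at hlt
        have hrel : chainRel W₁ r p q := ⟨hpW₁, hqW₂, le_of_lt hlt⟩
        have hchain : Relation.ReflTransGen (chainRel W₁ r) x₁ x₂ :=
          (hp.trans ((Relation.ReflTransGen.single hrel).trans
            ((@Std.Symm.symm _ _ (@Relation.ReflTransGen.symmetric _ (chainRel W₁ r) ⟨fun _ _ h => chainRel_symm W₁ r h⟩) _ _ hq))))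
        exact hne (chainComp_eq_of_rel hchain)
      · exact (h𝒞 A₁ hA₁m).2.2 W₁ hW₁ W₂ hW₂ hWeq p hpW₁ q hqW₂
    · have hsepY := h𝒱dec.2 i A₁ hA₁ A₂ hA₂ hAeq (f p) hpA₁ (f q) hqA₂
      have h1 := hf p q
      have h2 : L * dist p q ≤ L' * dist p q :=
        mul_le_mul_of_nonneg_right hLL' dist_nonneg
      have : L' * r ≤ L' * dist p q := le_trans hsepY (le_trans h1 h2)
      exact le_of_mul_le_mul_left this hL'pos
  · -- growth of iterated neighbourhoods
    intro s hs m
    have hspos : (0:ℝ) < s := lt_of_lt_of_le one_pos hs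
    set E : ℝ := L' * s + BR with hEdef
    have hE0 : (0:ℝ) ≤ E := add_nonneg (mul_nonneg hL'pos.le hspos.le) (by linarith)
    set D : ℝ := BR + m * E with hDdef
    have hD_BR : BR ≤ D := by
      have : (0:ℝ) ≤ (m:ℝ) * E := mul_nonneg (Nat.cast_nonneg m) hE0
      linarith
    have hDpos : (0:ℝ) < D := lt_of_lt_of_le (lt_of_lt_of_le one_pos hBR1) hD_BR
    obtain ⟨𝒲s, h𝒲sgrow, hdecs⟩ := hfib (2*D + 1) (by linarith) (r + s + 1) (by linarith)
    obtain ⟨g, hgF, Cg, hCg1, hgbound⟩ := h𝒲sgrow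
    refine ⟨g, hgF, Cg, hCg1, ?_⟩
    rintro U ⟨T, hT𝒴, rfl⟩ x ρ hρ t ht
    obtain ⟨A, hAm, W, hW, x₀, hx₀W, rfl⟩ := hmem𝒴 T hT𝒴
    have hWpre : W ⊆ f ⁻¹' A := by
      rw [(h𝒞 A hAm).2.1]; exact fun z hz => ⟨W, hW, hz⟩
    have hfx₀A : f x₀ ∈ A := hWpre hx₀W
    set y : Y := f x₀ with hydef
    set Astar : Set Y := Metric.closedBall y D with hAstardef
    have hAstar_diam : ∀ a ∈ Astar, ∀ b ∈ Astar, dist a b ≤ 2*D+1 := by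
      intro a ha b hb
      rw [hAstardef, Metric.mem_closedBall] at ha hb
      calc dist a b ≤ dist a y + dist y b := dist_triangle a y b
        _ ≤ D + D := by rw [dist_comm y b]; exact add_le_add ha hb
        _ ≤ 2*D+1 := by linarith
    obtain ⟨𝒞s, h𝒞s𝒲, hpre_s, hsep_s⟩ := hdecs Astar hAstar_diam
    have hx₀s : x₀ ∈ ⋃₀ 𝒞s := by
      rw [← hpre_s]
      show f x₀ ∈ Astar
      rw [hAstardef, Metric.mem_closedBall, ← hydef, dist_self]
      exact hDpos.le
    obtain ⟨Wstar, hWstar, hx₀Wstar⟩ := hx₀s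
    -- the key invariant
    have inv : ∀ k, k ≤ m → ∀ z ∈ iterNbhd (⋃ i, 𝒰 i) s k (chainComp W r x₀),
        z ∈ Wstar ∧ dist (f z) y ≤ BR + k * E := by
      intro k
      induction k with
      | zero =>
        intro _ z hz
        have hz' : z ∈ chainComp W r x₀ := hz
        have hzW : z ∈ W := chainComp_subset hx₀W hz'
        have hfzBR : dist (f z) y ≤ BR :=
          (hB A hAm (f z) (hWpre hzW) (f x₀) hfx₀A).trans hBBR
        have hWsub : W ⊆ ⋃₀ 𝒞s := by
          rw [← hpre_s]
          intro u hu
          have : dist (f u) y ≤ B := hB A hAm (f u) (hWpre hu) (f x₀) hfx₀A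
          show f u ∈ Astar
          rw [hAstardef, Metric.mem_closedBall]
          linarith
        constructor
        · obtain ⟨Wz, hWz, hzWz⟩ := hWsub hzW
          have hchain : Relation.ReflTransGen (chainRel W r) x₀ z := hz'
          have heq : Wstar = Wz :=
            same_piece (t := r + s + 1) (by linarith) (by linarith) hsep_s hWsub hchain
              Wstar hWstar hx₀Wstar Wz hWz hzWz
          rw [heq]; exact hzWz
        · push_cast
          linarith
      | succ k ih =>
        intro hk1 z hz
        have hk : k ≤ m := le_trans (Nat.le_succ k) hk1
        have hz' : z ∈ ⋃₀ {Y' | Y' ∈ (⋃ i, 𝒰 i) ∧ ∃ a ∈ Y',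
            ∃ w ∈ iterNbhd (⋃ i, 𝒰 i) s k (chainComp W r x₀), dist a w ≤ s} := hz
        obtain ⟨C', hC'mem, hzC'⟩ := hz'
        obtain ⟨hC'𝒴, a, haC', w, hw, haw⟩ := hC'mem
        obtain ⟨A', hA'm, W', hW', x₁, hx₁W', rfl⟩ := hmem𝒴 C' hC'𝒴
        have hW'pre : W' ⊆ f ⁻¹' A' := by
          rw [(h𝒞 A' hA'm).2.1]; exact fun u hu => ⟨W', hW', hu⟩
        have haW' : a ∈ W' := chainComp_subset hx₁W' haC'
        obtain ⟨hwWstar, hwdist⟩ := ih hk w hw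
        have hW'bound : ∀ u ∈ W', dist (f u) y ≤ BR + ((k:ℝ)+1) * E := by
          intro u hu
          have h1 : dist (f u) (f a) ≤ BR :=
            (hB A' hA'm (f u) (hW'pre hu) (f a) (hW'pre haW')).trans hBBR
          have h2 : dist (f a) (f w) ≤ L' * s := by
            have ha1 := hf a w
            have h2a : L * dist a w ≤ L' * dist a w :=
              mul_le_mul_of_nonneg_right hLL' dist_nonneg
            have h2b : L' * dist a w ≤ L' * s :=
              mul_le_mul_of_nonneg_left haw hL'pos.le
            linarith
          have h3 := dist_triangle (f u) (f a) y
          have h4 := dist_triangle (f a) (f w) y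
          have h5 : dist (f w) y ≤ BR + (k:ℝ) * E := hwdist
          rw [hEdef]
          push_cast
          rw [hEdef] at h5
          nlinarith
        have hW'sub : W' ⊆ ⋃₀ 𝒞s := by
          rw [← hpre_s]
          intro u hu
          show f u ∈ Astar
          rw [hAstardef, Metric.mem_closedBall]
          have hb1 := hW'bound u hu
          have hk1R : ((k:ℝ)+1) ≤ (m:ℝ) := by exact_mod_cast hk1
          have : ((k:ℝ)+1) * E ≤ (m:ℝ) * E := mul_le_mul_of_nonneg_right hk1R hE0
          rw [hDdef]
          linarith
        obtain ⟨Wa, hWa, haWa⟩ := hW'sub haW'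
        have hWaeq : Wa = Wstar := by
          by_contra hne
          have := hsep_s Wa hWa Wstar hWstar hne a haWa w hwWstar
          linarith
        have hzW' : z ∈ W' := chainComp_subset hx₁W' hzC'
        obtain ⟨Wz, hWz, hzWz⟩ := hW'sub hzW'
        have hchain : Relation.ReflTransGen (chainRel W' r) a z :=
          rtg_of_mem_chainComp haC' hzC'
        have heq : Wa = Wz :=
          same_piece (t := r + s + 1) (by linarith) (by linarith) hsep_s hW'sub hchain
            Wa hWa haWa Wz hWz hzWz
        constructor
        · rw [← hWaeq, heq]; exact hzWz
        · have := hW'bound z hzW'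
          push_cast
          linarith
    have hsub : iterNbhd (⋃ i, 𝒰 i) s m (chainComp W r x₀) ⊆ Wstar :=
      fun z hz => (inv m le_rfl z hz).1
    have htsub : ↑t ⊆ Wstar ∩ Metric.closedBall x ρ := by
      intro z hzt
      obtain ⟨h1, h2⟩ := ht hzt
      exact ⟨hsub h1, h2⟩
    exact hgbound Wstar (h𝒞s𝒲 hWstar) x ρ hρ t htsub
end

section
/- Let G be a finitely generated group equipped with the word metric of a finite generating set, let P be a normal subgroup of G, and let Q = G/P be equipped with the quotient metric d_Q(gP, hP) = inf{d_G(a, b) : a ∈ gP, b ∈ hP}. Suppose that every finitely generated subgroup of P, equipped with the metric induced from G, has subexponential growth (i.e. there is a non-decreasing function g with (1/r)·log g(r) → 0 as r → ∞ such that every ball of radius r in the subgroup contains at most g(r) points). Then ov-asdim_se(G) ≤ asdim(Q). -/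
open Metric Set

/-- The metric of the group `G` is the word metric of the generating set `S`. -/
def IsWordDist (G : Type*) [Group G] [MetricSpace G] (S : Set G) : Prop :=
  ∀ g h : G, dist g h =
    (sInf {n : ℕ | ∃ l : List G, l.length = n ∧ (∀ x ∈ l, x ∈ S ∨ x⁻¹ ∈ S) ∧
      g * l.prod = h} : ℕ)

section Aux
variable {G : Type*} [Group G] [MetricSpace G]

lemma word_dist_left_inv {S : Set G} (h : IsWordDist G S) (u g k : G) :
    dist (u * g) (u * k) = dist g k := by
  rw [h, h]
  have hset : {n : ℕ | ∃ l : List G, l.length = n ∧ (∀ x ∈ l, x ∈ S ∨ x⁻¹ ∈ S) ∧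
      (u * g) * l.prod = u * k} = {n : ℕ | ∃ l : List G, l.length = n ∧
      (∀ x ∈ l, x ∈ S ∨ x⁻¹ ∈ S) ∧ g * l.prod = k} := by
    ext n
    constructor
    · rintro ⟨l, hl, hmem, hprod⟩
      refine ⟨l, hl, hmem, ?_⟩
      have : u * (g * l.prod) = u * k := by rw [← mul_assoc]; exact hprod
      exact mul_left_cancel this
    · rintro ⟨l, hl, hmem, hprod⟩
      exact ⟨l, hl, hmem, by rw [mul_assoc, hprod]⟩
  rw [hset]

lemma wd_dist_eq {S : Set G} (h : IsWordDist G S) (g k : G) :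
    dist g k = dist 1 (g⁻¹ * k) := by
  have := word_dist_left_inv h g⁻¹ g k
  rw [inv_mul_cancel] at this
  exact this.symm

lemma wd_norm_inv {S : Set G} (h : IsWordDist G S) (g : G) :
    dist (1 : G) g⁻¹ = dist 1 g := by
  have h1 := word_dist_left_inv h g 1 g⁻¹
  rw [mul_one, mul_inv_cancel] at h1
  rw [← h1, dist_comm]

lemma norm_mul' {S : Set G} (h : IsWordDist G S) (g k : G) :
    dist (1 : G) (g * k) ≤ dist 1 g + dist 1 k := by
  have h1 : dist g (g * k) = dist 1 k := by
    have := word_dist_left_inv h g 1 k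
    rw [mul_one] at this
    exact this
  calc dist (1:G) (g*k) ≤ dist 1 g + dist g (g*k) := dist_triangle _ _ _
    _ = dist 1 g + dist 1 k := by rw [h1]

lemma ball_finite' {S : Finset G} (h : IsWordDist G (S : Set G)) (ρ : ℝ) :
    (Metric.closedBall (1 : G) ρ).Finite := by
  classical
  set T : Finset G := S ∪ S.image (·⁻¹) with hT
  let Pn : ℕ → Finset G := fun n =>
    Nat.rec {1} (fun _ Pm => Pm ∪ (T ×ˢ Pm).image (fun p => p.1 * p.2)) n
  have hmono : ∀ n, Pn n ⊆ Pn (n + 1) := fun n => Finset.subset_union_left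
  have hone : ∀ n, (1 : G) ∈ Pn n := by
    intro n
    induction n with
    | zero => simp [Pn]
    | succ k ih => exact hmono k ih
  have key : ∀ (l : List G), (∀ x ∈ l, x ∈ (S : Set G) ∨ x⁻¹ ∈ (S : Set G)) →
      ∀ n, l.length ≤ n → l.prod ∈ Pn n := by
    intro l
    induction l with
    | nil => intro _ n _; simpa using hone n
    | cons x l ih =>
      intro hx n hlen
      cases n with
      | zero => simp at hlen
      | succ k =>
        have hl : l.prod ∈ Pn k := ih (fun y hy => hx y (List.mem_cons_of_mem _ hy)) k
          (by simpa using Nat.succ_le_succ_iff.mp hlen)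
        have hxT : x ∈ T := by
          rcases hx x List.mem_cons_self with h1 | h1
          · exact Finset.mem_union_left _ (by exact_mod_cast h1)
          · refine Finset.mem_union_right _ ?_
            refine Finset.mem_image.2 ⟨x⁻¹, by exact_mod_cast h1, by simp⟩
        have hmem2 : x * l.prod ∈ (T ×ˢ Pn k).image (fun p => p.1 * p.2) :=
          Finset.mem_image.2 ⟨(x, l.prod), Finset.mem_product.2 ⟨hxT, hl⟩, rfl⟩
        have hpc : (x :: l).prod = x * l.prod := List.prod_cons
        rw [hpc]
        exact Finset.mem_union_right _ hmem2
  apply Set.Finite.subset (Pn ⌈ρ⌉₊ : Finset G).finite_toSet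
  intro y hy
  have hd : dist (1 : G) y ≤ ρ := by
    rw [Metric.mem_closedBall] at hy
    rwa [dist_comm] at hy
  set A := {n : ℕ | ∃ l : List G, l.length = n ∧
    (∀ x ∈ l, x ∈ (S : Set G) ∨ x⁻¹ ∈ (S : Set G)) ∧ (1 : G) * l.prod = y} with hA
  have hdval : dist (1 : G) y = ((sInf A : ℕ) : ℝ) := by rw [h]
  by_cases hAne : A.Nonempty
  · obtain ⟨l, hlen, hmem, hprod⟩ := Nat.sInf_mem hAne
    have hy' : l.prod = y := by simpa using hprod
    have hle : sInf A ≤ ⌈ρ⌉₊ := by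
      have h2 : ((sInf A : ℕ) : ℝ) ≤ ρ := hdval ▸ hd
      exact_mod_cast le_trans h2 (Nat.le_ceil ρ)
    exact hy' ▸ Finset.mem_coe.2 (key l hmem _ (hlen ▸ hle))
  · have hAe : A = ∅ := Set.not_nonempty_iff_eq_empty.mp hAne
    have hzero : dist (1 : G) y = 0 := by
      rw [hdval, hAe, Nat.sInf_empty]; simp
    have hy1 : y = 1 := (dist_eq_zero.mp hzero).symm
    simpa [hy1] using hone ⌈ρ⌉₊

end Aux

section Aux2
variable {G : Type*} [Group G] [MetricSpace G]
variable {Q : Type*} [Group Q] [MetricSpace Q]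

lemma quot_dist_le (π : G →* Q)
    (hQdist : ∀ q q' : Q,
      dist q q' = sInf {r : ℝ | ∃ a b : G, π a = q ∧ π b = q' ∧ dist a b = r})
    (a b : G) : dist (π a) (π b) ≤ dist a b := by
  rw [hQdist]
  refine csInf_le ⟨0, ?_⟩ ⟨a, b, rfl, rfl, rfl⟩
  rintro x ⟨a', b', -, -, rfl⟩
  exact dist_nonneg

lemma quot_lift (π : G →* Q) (hsurj : Function.Surjective π)
    (hQdist : ∀ q q' : Q,
      dist q q' = sInf {r : ℝ | ∃ a b : G, π a = q ∧ π b = q' ∧ dist a b = r})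
    (q q' : Q) (c : ℝ) (h : dist q q' ≤ c) :
    ∃ a b : G, π a = q ∧ π b = q' ∧ dist a b ≤ c + 1 := by
  rw [hQdist] at h
  obtain ⟨a₀, ha₀⟩ := hsurj q
  obtain ⟨b₀, hb₀⟩ := hsurj q'
  have hne : {r : ℝ | ∃ a b : G, π a = q ∧ π b = q' ∧ dist a b = r}.Nonempty :=
    ⟨dist a₀ b₀, a₀, b₀, ha₀, hb₀, rfl⟩
  obtain ⟨x, ⟨a, b, ha, hb, rfl⟩, hlt⟩ := exists_lt_of_csInf_lt hne
    (lt_of_le_of_lt h (lt_add_one c))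
  exact ⟨a, b, ha, hb, hlt.le⟩

lemma quot_left_inv {S : Set G} (π : G →* Q) (hGdist : IsWordDist G S)
    (hQdist : ∀ q q' : Q,
      dist q q' = sInf {r : ℝ | ∃ a b : G, π a = q ∧ π b = q' ∧ dist a b = r})
    (u : G) (q q' : Q) : dist (π u * q) (π u * q') = dist q q' := by
  rw [hQdist, hQdist]
  congr 1
  ext x
  constructor
  · rintro ⟨a, b, ha, hb, rfl⟩
    refine ⟨u⁻¹ * a, u⁻¹ * b, ?_, ?_, ?_⟩
    · rw [map_mul, map_inv, ha]; group
    · rw [map_mul, map_inv, hb]; group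
    · exact word_dist_left_inv hGdist u⁻¹ a b
  · rintro ⟨a, b, ha, hb, rfl⟩
    refine ⟨u * a, u * b, ?_, ?_, ?_⟩
    · rw [map_mul, ha]
    · rw [map_mul, hb]
    · exact word_dist_left_inv hGdist u a b

lemma coset_trans {H : Subgroup G} {u v w : G} (h1 : u⁻¹ * v ∈ H) (h2 : u⁻¹ * w ∈ H) :
    v⁻¹ * w ∈ H := by
  have h3 := mul_mem (inv_mem h1) h2
  simpa [mul_inv_rev, mul_assoc] using h3

lemma conj_closure_mem {S : Set G} (hGdist : IsWordDist G S) {P : Subgroup G}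
    (hP : P.Normal) {R LL : ℝ} {h w : G}
    (hh : h ∈ Subgroup.closure {x : G | x ∈ P ∧ dist 1 x ≤ R})
    (hw : dist 1 w ≤ LL) :
    w * h * w⁻¹ ∈ Subgroup.closure {x : G | x ∈ P ∧ dist 1 x ≤ R + 2 * LL} := by
  have hmem : w * h * w⁻¹ ∈
      (Subgroup.closure {x : G | x ∈ P ∧ dist 1 x ≤ R}).map (MulAut.conj w).toMonoidHom :=
    ⟨h, hh, by simp [MulAut.conj_apply]⟩
  rw [MonoidHom.map_closure] at hmem
  refine Subgroup.closure_mono ?_ hmem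
  rintro y ⟨x, ⟨hxP, hxd⟩, rfl⟩
  refine ⟨?_, ?_⟩
  · simpa [MulAut.conj_apply] using hP.conj_mem x hxP w
  · have h1 : dist (1:G) (w * x * w⁻¹) ≤ dist 1 (w * x) + dist 1 w⁻¹ := norm_mul' hGdist _ _
    have h2 : dist (1:G) (w * x) ≤ dist 1 w + dist 1 x := norm_mul' hGdist _ _
    have h3 : dist (1:G) w⁻¹ = dist 1 w := wd_norm_inv hGdist w
    simp only [MulAut.conj_apply, MulEquiv.coe_toMonoidHom]
    linarith

lemma subexp_comp {g : ℝ → ℝ} (hg : SubexpFun g) {A c : ℝ} (hA : 1 ≤ A) (hc : 0 ≤ c) :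
    SubexpFun (fun t => g (A * t + c)) := by
  obtain ⟨hmono, hpos, hlim⟩ := hg
  have hA0 : (0:ℝ) < A := lt_of_lt_of_le one_pos hA
  refine ⟨?_, fun t => hpos _, ?_⟩
  · intro t1 h1 t2 h2 h12
    have e1 : (0:ℝ) ≤ A * t1 + c := by
      have := mul_nonneg hA0.le (Set.mem_Ici.mp h1); linarith
    have e2 : (0:ℝ) ≤ A * t2 + c := by
      have := mul_nonneg hA0.le (Set.mem_Ici.mp h2); linarith
    exact hmono e1 e2 (by nlinarith)
  · have h1 : Filter.Tendsto (fun t : ℝ => A * t + c) Filter.atTop Filter.atTop := by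
      apply Filter.tendsto_atTop_add_const_right
      exact Filter.Tendsto.const_mul_atTop hA0 Filter.tendsto_id
    have h2 : Filter.Tendsto (fun t : ℝ => Real.log (g (A * t + c)) / (A * t + c))
        Filter.atTop (nhds 0) := hlim.comp h1
    have h3 : Filter.Tendsto (fun t : ℝ => A + c / t) Filter.atTop (nhds (A + 0)) :=
      Filter.Tendsto.add tendsto_const_nhds (Filter.Tendsto.div_atTop tendsto_const_nhds
        Filter.tendsto_id)
    have h4 := h2.mul h3
    rw [zero_mul] at h4
    apply h4.congr'
    filter_upwards [Filter.eventually_gt_atTop (max 0 ((1 - c)/A))] with t ht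
    have ht0 : (0:ℝ) < t := lt_of_le_of_lt (le_max_left _ _) ht
    have hu : (0:ℝ) < A * t + c := by
      have : (1 - c)/A < t := lt_of_le_of_lt (le_max_right _ _) ht
      have := (div_lt_iff₀ hA0).mp this
      nlinarith
    have : A + c / t = (A * t + c) / t := by field_simp
    rw [this]
    field_simp

end Aux2

section Constr
variable {G : Type*} [Group G] [MetricSpace G]
variable {Q : Type*} [Group Q] [MetricSpace Q]

open Classical in
noncomputable def tauF (π : G →* Q) (R : ℝ) (q : Q) : G :=
  if h : ∃ a : G, π a = q ∧ dist 1 a ≤ R + 1 then h.choose else 1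

lemma tauF_spec {S : Set G} (π : G →* Q) (hGdist : IsWordDist G S)
    (hsurj : Function.Surjective π)
    (hQdist : ∀ q q' : Q,
      dist q q' = sInf {r : ℝ | ∃ a b : G, π a = q ∧ π b = q' ∧ dist a b = r})
    {R : ℝ} {q : Q} (hq : dist q 1 ≤ R) :
    π (tauF π R q) = q ∧ dist 1 (tauF π R q) ≤ R + 1 := by
  obtain ⟨a, b, ha, hb, hab⟩ := quot_lift π hsurj hQdist q 1 R hq
  have hex : ∃ a : G, π a = q ∧ dist 1 a ≤ R + 1 := by
    refine ⟨b⁻¹ * a, ?_, ?_⟩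
    · rw [map_mul, map_inv, ha, hb]; group
    · have : dist (1:G) (b⁻¹ * a) = dist b a := (wd_dist_eq hGdist b a).symm
      rw [this, dist_comm]; exact hab
  rw [tauF, dif_pos hex]
  exact hex.choose_spec

open Classical in
noncomputable def q0F (V : Set Q) : Q := if h : V.Nonempty then h.choose else 1

lemma q0F_mem {V : Set Q} (h : V.Nonempty) : q0F V ∈ V := by
  rw [q0F, dif_pos h]; exact h.choose_spec

noncomputable def g0F (π : G →* Q) (hsurj : Function.Surjective π) (V : Set Q) : G :=
  (hsurj (q0F V)).choose

lemma g0F_spec (π : G →* Q) (hsurj : Function.Surjective π) (V : Set Q) :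
    π (g0F π hsurj V) = q0F V := (hsurj (q0F V)).choose_spec

def HHF (P : Subgroup G) (R : ℝ) : Subgroup G :=
  Subgroup.closure {x : G | x ∈ P ∧ dist 1 x ≤ R}

lemma HHF_le (P : Subgroup G) (R : ℝ) : HHF P R ≤ P :=
  (Subgroup.closure_le P).2 (fun _ hx => hx.1)

lemma HHF_mono (P : Subgroup G) {R R' : ℝ} (h : R ≤ R') : HHF P R ≤ HHF P R' :=
  Subgroup.closure_mono (fun x hx => ⟨hx.1, hx.2.trans h⟩)

lemma HHF_fg {S : Finset G} (hGdist : IsWordDist G (S : Set G)) (P : Subgroup G) (R : ℝ) :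
    (HHF P R).FG := by
  rw [Subgroup.fg_iff]
  refine ⟨{x : G | x ∈ P ∧ dist 1 x ≤ R}, rfl, ?_⟩
  apply (ball_finite' hGdist R).subset
  intro x hx
  rw [Metric.mem_closedBall, dist_comm]
  exact hx.2

noncomputable def ppF (π : G →* Q) (R : ℝ) (z : G) : G := z * (tauF π R (π z))⁻¹

lemma ppF_eq (π : G →* Q) (R : ℝ) (z : G) : ppF π R z * tauF π R (π z) = z := by
  rw [ppF]; group

lemma ppF_diff (π : G →* Q) (R : ℝ) (z z' : G) :
    (ppF π R z)⁻¹ * ppF π R z' = tauF π R (π z) * (z⁻¹ * z') * (tauF π R (π z'))⁻¹ := by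
  rw [ppF, ppF]; group

lemma ppF_mem_P {S : Set G} (π : G →* Q) (hGdist : IsWordDist G S)
    (hsurj : Function.Surjective π)
    (hQdist : ∀ q q' : Q,
      dist q q' = sInf {r : ℝ | ∃ a b : G, π a = q ∧ π b = q' ∧ dist a b = r})
    {P : Subgroup G} (hker : π.ker = P) {R : ℝ} {z : G} (hz : dist (π z) 1 ≤ R) :
    ppF π R z ∈ P := by
  rw [← hker, MonoidHom.mem_ker, ppF, map_mul, map_inv,
    (tauF_spec π hGdist hsurj hQdist hz).1]
  group

lemma ppF_norm_diff {S : Set G} (π : G →* Q) (hGdist : IsWordDist G S)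
    (hsurj : Function.Surjective π)
    (hQdist : ∀ q q' : Q,
      dist q q' = sInf {r : ℝ | ∃ a b : G, π a = q ∧ π b = q' ∧ dist a b = r})
    {R : ℝ} {z z' : G} (hz : dist (π z) 1 ≤ R) (hz' : dist (π z') 1 ≤ R) :
    dist 1 ((ppF π R z)⁻¹ * ppF π R z') ≤ (R + 1) + dist z z' + (R + 1) := by
  rw [ppF_diff]
  have h1 := norm_mul' hGdist (tauF π R (π z) * (z⁻¹ * z')) (tauF π R (π z'))⁻¹
  have h2 := norm_mul' hGdist (tauF π R (π z)) (z⁻¹ * z')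
  have h3 : dist (1:G) (tauF π R (π z'))⁻¹ = dist 1 (tauF π R (π z')) :=
    wd_norm_inv hGdist _
  have h4 := (tauF_spec π hGdist hsurj hQdist hz).2
  have h5 := (tauF_spec π hGdist hsurj hQdist hz').2
  have h6 : dist (1:G) (z⁻¹ * z') = dist z z' := (wd_dist_eq hGdist z z').symm
  linarith

noncomputable def PieceF (π : G →* Q) (hsurj : Function.Surjective π) (P : Subgroup G)
    (R1 B1 : ℝ) (V : Set Q) (a : G) : Set G :=
  {b | π b ∈ V ∧ (ppF π B1 ((g0F π hsurj V)⁻¹ * a))⁻¹ *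
    ppF π B1 ((g0F π hsurj V)⁻¹ * b) ∈ HHF P R1}

lemma hat_dist {S : Set G} (π : G →* Q) (hGdist : IsWordDist G S)
    (hsurj : Function.Surjective π)
    (hQdist : ∀ q q' : Q,
      dist q q' = sInf {r : ℝ | ∃ a b : G, π a = q ∧ π b = q' ∧ dist a b = r})
    (V : Set Q) (b : G) :
    dist (π ((g0F π hsurj V)⁻¹ * b)) 1 = dist (π b) (q0F V) := by
  have h1 := quot_left_inv π hGdist hQdist (g0F π hsurj V)⁻¹ (π b) (q0F V)
  rw [map_inv, g0F_spec π hsurj V] at h1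
  rw [map_mul, map_inv, g0F_spec π hsurj V]
  rw [inv_mul_cancel] at h1
  exact h1

end Constr

set_option maxHeartbeats 2000000 in
/-- If `1 → P → G → Q → 1` is an extension of a finitely generated group
`G` such that every finitely generated subgroup of `P` has subexponential growth in the
induced metric, then `ov-asdim_se(G) ≤ asdim(Q)` (with `Q` carrying the quotient metric). -/
theorem ov_asdim_se_le_asdim_quotient
    (G : Type*) [Group G] [MetricSpace G]
    (S : Finset G) (hgen : Subgroup.closure (S : Set G) = ⊤)
    (hGdist : IsWordDist G (S : Set G))
    (P : Subgroup G) (hPnormal : P.Normal)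
    (Q : Type*) [Group Q] [MetricSpace Q]
    (π : G →* Q) (hsurj : Function.Surjective π) (hker : π.ker = P)
    (hQdist : ∀ q q' : Q,
      dist q q' = sInf {r : ℝ | ∃ a b : G, π a = q ∧ π b = q' ∧ dist a b = r})
    (hsub : ∀ H : Subgroup G, H ≤ P → H.FG →
      ∃ g : ℝ → ℝ, SubexpFun g ∧ ∀ c : G, c ∈ H → ∀ r : ℝ, 0 ≤ r →
        ∀ t : Finset G, ↑t ⊆ {x : G | x ∈ H} ∩ Metric.closedBall c r →
          (t.card : ℝ) ≤ g r)
    (n : ℕ) (hQ : ClassicalAsdimLE Q n) :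
    OvAsdimLE seFamily G n := by
  classical
  intro r hr
  obtain ⟨𝒱, ⟨hVcover, hVsep⟩, B, hB⟩ := hQ r hr
  obtain ⟨B1, hB1def⟩ : ∃ X : ℝ, X = max B 0 + 1 := ⟨_, rfl⟩
  have hB1one : (1:ℝ) ≤ B1 := by
    rw [hB1def]
    have : (0:ℝ) ≤ max B 0 := le_max_right _ _
    linarith
  have hBB1 : B ≤ B1 := by
    rw [hB1def]
    have : B ≤ max B 0 := le_max_left _ _
    linarith
  obtain ⟨R1, hR1def⟩ : ∃ X : ℝ, X = r + 2 * B1 + 4 := ⟨_, rfl⟩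
  set 𝒰 : Fin (n+1) → Set (Set G) := fun i =>
    {U | ∃ V ∈ 𝒱 i, ∃ a : G, π a ∈ V ∧ U = PieceF π hsurj P R1 B1 V a} with h𝒰def
  have hself : ∀ (V : Set Q) (a : G), π a ∈ V → a ∈ PieceF π hsurj P R1 B1 V a := by
    intro V a ha
    exact ⟨ha, by rw [inv_mul_cancel]; exact one_mem _⟩
  have hhatB1 : ∀ (V : Set Q), (V ∈ ⋃ i, 𝒱 i) → ∀ b : G, π b ∈ V →
      dist (π ((g0F π hsurj V)⁻¹ * b)) 1 ≤ B1 := by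
    intro V hV b hb
    rw [hat_dist π hGdist hsurj hQdist]
    have hVne : V.Nonempty := ⟨π b, hb⟩
    have := hB V hV (π b) hb (q0F V) (q0F_mem hVne)
    linarith
  refine ⟨𝒰, ⟨?_, ?_⟩, ?_⟩
  · -- covering
    intro x
    obtain ⟨i, V, hV, hxV⟩ := hVcover (π x)
    exact ⟨i, PieceF π hsurj P R1 B1 V x, ⟨V, hV, x, hxV, rfl⟩, hself V x hxV⟩
  · -- separation
    intro i U hU U' hU' hne x hx y hy
    obtain ⟨V, hV, a, ha, rfl⟩ := hU
    obtain ⟨V', hV', a', ha', rfl⟩ := hU'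
    by_cases hVV : V = V'
    · subst hVV
      by_contra hlt
      push_neg at hlt
      apply hne
      have hVmem : V ∈ ⋃ i, 𝒱 i := Set.mem_iUnion.2 ⟨i, hV⟩
      have hx1 := hx.1
      have hy1 := hy.1
      have hx2 := hx.2
      have hy2 := hy.2
      have hxh : dist (π ((g0F π hsurj V)⁻¹ * x)) 1 ≤ B1 := hhatB1 V hVmem x hx1
      have hyh : dist (π ((g0F π hsurj V)⁻¹ * y)) 1 ≤ B1 := hhatB1 V hVmem y hy1
      have hmid : (ppF π B1 ((g0F π hsurj V)⁻¹ * x))⁻¹ *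
          ppF π B1 ((g0F π hsurj V)⁻¹ * y) ∈ HHF P R1 := by
        apply Subgroup.subset_closure
        constructor
        · exact mul_mem (inv_mem (ppF_mem_P π hGdist hsurj hQdist hker hxh))
            (ppF_mem_P π hGdist hsurj hQdist hker hyh)
        · have h1 := ppF_norm_diff π hGdist hsurj hQdist hxh hyh
          have h2 : dist ((g0F π hsurj V)⁻¹ * x) ((g0F π hsurj V)⁻¹ * y) = dist x y :=
            word_dist_left_inv hGdist _ x y
          rw [h2] at h1
          rw [hR1def]
          linarith
      have hcoset : (ppF π B1 ((g0F π hsurj V)⁻¹ * a))⁻¹ *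
          ppF π B1 ((g0F π hsurj V)⁻¹ * a') ∈ HHF P R1 := by
        have h7 := mul_mem (mul_mem hx2 hmid) (inv_mem hy2)
        have heq : (ppF π B1 ((g0F π hsurj V)⁻¹ * a))⁻¹ * ppF π B1 ((g0F π hsurj V)⁻¹ * x) *
            ((ppF π B1 ((g0F π hsurj V)⁻¹ * x))⁻¹ * ppF π B1 ((g0F π hsurj V)⁻¹ * y)) *
            ((ppF π B1 ((g0F π hsurj V)⁻¹ * a'))⁻¹ * ppF π B1 ((g0F π hsurj V)⁻¹ * y))⁻¹ =
            (ppF π B1 ((g0F π hsurj V)⁻¹ * a))⁻¹ * ppF π B1 ((g0F π hsurj V)⁻¹ * a') := by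
          group
        rwa [heq] at h7
      ext b
      simp only [PieceF, Set.mem_setOf_eq]
      constructor
      · rintro ⟨hb1, hb2⟩
        refine ⟨hb1, ?_⟩
        have h8 := mul_mem (inv_mem hcoset) hb2
        have heq : ((ppF π B1 ((g0F π hsurj V)⁻¹ * a))⁻¹ * ppF π B1 ((g0F π hsurj V)⁻¹ * a'))⁻¹ *
            ((ppF π B1 ((g0F π hsurj V)⁻¹ * a))⁻¹ * ppF π B1 ((g0F π hsurj V)⁻¹ * b)) =
            (ppF π B1 ((g0F π hsurj V)⁻¹ * a'))⁻¹ * ppF π B1 ((g0F π hsurj V)⁻¹ * b) := by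
          group
        rwa [heq] at h8
      · rintro ⟨hb1, hb2⟩
        refine ⟨hb1, ?_⟩
        have h8 := mul_mem hcoset hb2
        have heq : ((ppF π B1 ((g0F π hsurj V)⁻¹ * a))⁻¹ * ppF π B1 ((g0F π hsurj V)⁻¹ * a')) *
            ((ppF π B1 ((g0F π hsurj V)⁻¹ * a'))⁻¹ * ppF π B1 ((g0F π hsurj V)⁻¹ * b)) =
            (ppF π B1 ((g0F π hsurj V)⁻¹ * a))⁻¹ * ppF π B1 ((g0F π hsurj V)⁻¹ * b) := by
          group
        rwa [heq] at h8
    · have h1 : r ≤ dist (π x) (π y) := hVsep i V hV V' hV' hVV (π x) hx.1 (π y) hy.1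
      exact h1.trans (quot_dist_le π hQdist x y)
  · -- FGrowing for iterated neighbourhoods
    intro s hs m
    obtain ⟨K, hKdef⟩ : ∃ X : ℝ, X = s + 4 * B1 + 4 := ⟨_, rfl⟩
    have hK0 : (0:ℝ) < K := by rw [hKdef]; linarith
    have hm0 : (0:ℝ) ≤ (m:ℝ) := Nat.cast_nonneg m
    obtain ⟨R3, hR3def⟩ : ∃ X : ℝ, X = B1 + ((m : ℝ) + 1) * K + 4 * B1 + s + 10 := ⟨_, rfl⟩
    have hmK : B1 + (m:ℝ) * K + K = B1 + ((m:ℝ)+1) * K := by ring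
    have hR3a : B1 + (m : ℝ) * K + K ≤ R3 := by rw [hmK, hR3def]; linarith
    have hR30 : (0:ℝ) < R3 := by
      rw [hR3def]; nlinarith
    obtain ⟨L, hLdef⟩ : ∃ X : ℝ, X = R3 + B1 + 4 := ⟨_, rfl⟩
    have hL0 : (0:ℝ) < L := by rw [hLdef]; linarith
    have hR10 : (0:ℝ) < R1 := by rw [hR1def]; linarith
    obtain ⟨R4, hR4def⟩ : ∃ X : ℝ, X = R1 + 2 * L + 2 := ⟨_, rfl⟩
    obtain ⟨Rst, hRstdef⟩ : ∃ X : ℝ, X = R4 + 2 * R3 + s + 10 := ⟨_, rfl⟩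
    have hR4Rst : R4 ≤ Rst := by rw [hRstdef]; linarith
    have hR1R4 : R1 ≤ R4 := by rw [hR4def]; linarith
    have hR40 : (0:ℝ) < R4 := by rw [hR4def]; linarith
    have hRst0 : (0:ℝ) < Rst := by rw [hRstdef]; linarith
    have hmK0 : (0:ℝ) ≤ (m:ℝ) * K := mul_nonneg hm0 hK0.le
    have hBsK : B + s ≤ K := by rw [hKdef]; linarith
    have hR3big : B1 + (m:ℝ) * K + s + 3 * B1 + 4 ≤ R3 := by
      have he : ((m:ℝ) + 1) * K = (m:ℝ) * K + K := by ring
      rw [hR3def, he, hKdef]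
      linarith
    obtain ⟨gst, hgst, hgbound⟩ := hsub (HHF P Rst) (HHF_le P Rst) (HHF_fg hGdist P Rst)
    have hfin := ball_finite' hGdist (R3 + 1)
    obtain ⟨Mb, hMbdef⟩ : ∃ X : ℕ, X = hfin.toFinset.card := ⟨_, rfl⟩
    obtain ⟨C, hCdef⟩ : ∃ X : ℝ, X = max (Mb : ℝ) 1 := ⟨_, rfl⟩
    have hC1 : (1:ℝ) ≤ C := by rw [hCdef]; exact le_max_right _ _
    refine ⟨fun t => gst (2 * t + (2 * R3 + 2)), ?_, C, hC1, ?_⟩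
    · exact subexp_comp hgst (by norm_num) (by linarith)
    intro U hU x ρ hρ t ht
    obtain ⟨Y, hY, rfl⟩ := hU
    rw [Set.mem_iUnion] at hY
    obtain ⟨i, hYi⟩ := hY
    obtain ⟨V, hV, a, ha, rfl⟩ := hYi
    have hVmem : V ∈ ⋃ i, 𝒱 i := Set.mem_iUnion.2 ⟨i, hV⟩
    have hVne : V.Nonempty := ⟨π a, ha⟩
    have hq0V : q0F V ∈ V := q0F_mem hVne
    have hhat3 : ∀ b : G, dist (π b) (q0F V) ≤ R3 →
        dist (π ((g0F π hsurj V)⁻¹ * b)) 1 ≤ R3 := by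
      intro b hb
      rw [hat_dist π hGdist hsurj hQdist]
      exact hb
    -- transfer lemma
    have htransfer : ∀ V' : Set Q, V' ∈ ⋃ i, 𝒱 i → ∀ a' u b : G,
        u ∈ PieceF π hsurj P R1 B1 V' a' → b ∈ PieceF π hsurj P R1 B1 V' a' →
        dist (π u) (q0F V) ≤ R3 - 2 * B1 →
        (ppF π R3 ((g0F π hsurj V)⁻¹ * u))⁻¹ * ppF π R3 ((g0F π hsurj V)⁻¹ * b)
          ∈ HHF P Rst := by
      intro V' hV'mem a' u b hu hb hud
      have hbu : dist (π b) (π u) ≤ B := hB V' hV'mem (π b) hb.1 (π u) hu.1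
      have hu3 : dist (π ((g0F π hsurj V)⁻¹ * u)) 1 ≤ R3 := hhat3 u (by linarith)
      have hb3 : dist (π ((g0F π hsurj V)⁻¹ * b)) 1 ≤ R3 := by
        apply hhat3 b
        have := dist_triangle (π b) (π u) (q0F V)
        linarith
      have hu1 : dist (π ((g0F π hsurj V')⁻¹ * u)) 1 ≤ B1 := hhatB1 V' hV'mem u hu.1
      have hb1 : dist (π ((g0F π hsurj V')⁻¹ * b)) 1 ≤ B1 := hhatB1 V' hV'mem b hb.1
      have hh : (ppF π B1 ((g0F π hsurj V')⁻¹ * u))⁻¹ *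
          ppF π B1 ((g0F π hsurj V')⁻¹ * b) ∈ HHF P R1 := coset_trans hu.2 hb.2
      have ht3u := tauF_spec π hGdist hsurj hQdist hu3
      have ht3b := tauF_spec π hGdist hsurj hQdist hb3
      have ht1u := tauF_spec π hGdist hsurj hQdist hu1
      have ht1b := tauF_spec π hGdist hsurj hQdist hb1
      set τ3u := tauF π R3 (π ((g0F π hsurj V)⁻¹ * u)) with hτ3u
      set τ3b := tauF π R3 (π ((g0F π hsurj V)⁻¹ * b)) with hτ3b
      set τ1u := tauF π B1 (π ((g0F π hsurj V')⁻¹ * u)) with hτ1u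
      set τ1b := tauF π B1 (π ((g0F π hsurj V')⁻¹ * b)) with hτ1b
      have hkey : (ppF π R3 ((g0F π hsurj V)⁻¹ * u))⁻¹ * ppF π R3 ((g0F π hsurj V)⁻¹ * b) =
          (τ3u * τ1u⁻¹) * ((ppF π B1 ((g0F π hsurj V')⁻¹ * u))⁻¹ *
            ppF π B1 ((g0F π hsurj V')⁻¹ * b)) * (τ1b * τ3b⁻¹) := by
        rw [ppF_diff, ppF_diff, ← hτ3u, ← hτ3b, ← hτ1u, ← hτ1b]
        group
      have hw1norm : dist 1 (τ3u * τ1u⁻¹) ≤ L := by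
        have h1 := norm_mul' hGdist τ3u τ1u⁻¹
        have h2 := wd_norm_inv hGdist τ1u
        have h3 := ht3u.2
        have h4 := ht1u.2
        rw [hLdef]
        linarith
      have hw2norm : dist 1 (τ1b * τ3b⁻¹) ≤ L := by
        have h1 := norm_mul' hGdist τ1b τ3b⁻¹
        have h2 := wd_norm_inv hGdist τ3b
        have h3 := ht3b.2
        have h4 := ht1b.2
        rw [hLdef]
        linarith
      have hconj : (τ3u * τ1u⁻¹) * ((ppF π B1 ((g0F π hsurj V')⁻¹ * u))⁻¹ *
          ppF π B1 ((g0F π hsurj V')⁻¹ * b)) * (τ3u * τ1u⁻¹)⁻¹ ∈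
          Subgroup.closure {x : G | x ∈ P ∧ dist 1 x ≤ R1 + 2 * L} :=
        conj_closure_mem hGdist hPnormal hh hw1norm
      have hw12P : (τ3u * τ1u⁻¹) * (τ1b * τ3b⁻¹) ∈ P := by
        rw [← hker, MonoidHom.mem_ker]
        have e1 := ht3u.1
        have e2 := ht3b.1
        have e3 := ht1u.1
        have e4 := ht1b.1
        simp only [map_mul, map_inv]
        rw [e1, e2, e3, e4]
        simp only [map_mul, map_inv]
        group
      have hw12n : dist 1 ((τ3u * τ1u⁻¹) * (τ1b * τ3b⁻¹)) ≤ Rst := by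
        have h1 := norm_mul' hGdist (τ3u * τ1u⁻¹) (τ1b * τ3b⁻¹)
        rw [hRstdef, hR4def]
        linarith [hR10, hR30]
      have hw12 : (τ3u * τ1u⁻¹) * (τ1b * τ3b⁻¹) ∈ HHF P Rst :=
        Subgroup.subset_closure ⟨hw12P, hw12n⟩
      rw [hkey]
      have hconj' : (τ3u * τ1u⁻¹) * ((ppF π B1 ((g0F π hsurj V')⁻¹ * u))⁻¹ *
          ppF π B1 ((g0F π hsurj V')⁻¹ * b)) * (τ3u * τ1u⁻¹)⁻¹ ∈ HHF P Rst := by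
        apply HHF_mono P (show R1 + 2 * L ≤ Rst by rw [hRstdef, hR4def]; linarith)
        exact hconj
      have hfinal := mul_mem hconj' hw12
      have heq : (τ3u * τ1u⁻¹) * ((ppF π B1 ((g0F π hsurj V')⁻¹ * u))⁻¹ *
          ppF π B1 ((g0F π hsurj V')⁻¹ * b)) * (τ3u * τ1u⁻¹)⁻¹ *
          ((τ3u * τ1u⁻¹) * (τ1b * τ3b⁻¹)) =
          (τ3u * τ1u⁻¹) * ((ppF π B1 ((g0F π hsurj V')⁻¹ * u))⁻¹ *
          ppF π B1 ((g0F π hsurj V')⁻¹ * b)) * (τ1b * τ3b⁻¹) := by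
        group
      rwa [heq] at hfinal
    -- the invariant along iterated neighbourhoods
    have hinv : ∀ j, j ≤ m →
        ∀ b ∈ iterNbhd (⋃ i, 𝒰 i) s j (PieceF π hsurj P R1 B1 V a),
        dist (π b) (q0F V) ≤ B1 + (j : ℝ) * K ∧
        (ppF π R3 ((g0F π hsurj V)⁻¹ * a))⁻¹ * ppF π R3 ((g0F π hsurj V)⁻¹ * b)
          ∈ HHF P Rst := by
      intro j
      induction j with
      | zero =>
        intro _ b hb
        have hb' : b ∈ PieceF π hsurj P R1 B1 V a := hb
        have hQb : dist (π b) (q0F V) ≤ B := hB V hVmem (π b) hb'.1 (q0F V) hq0V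
        constructor
        · push_cast
          linarith
        · apply htransfer V hVmem a a b (hself V a ha) hb'
          have := hB V hVmem (π a) ha (q0F V) hq0V
          linarith [hR3big, hmK0, hs]
      | succ j ihj =>
        intro hj b hb
        have hjm : j ≤ m := Nat.le_of_succ_le hj
        have hjK : (j:ℝ) * K ≤ (m:ℝ) * K := by
          apply mul_le_mul_of_nonneg_right _ hK0.le
          exact_mod_cast hjm
        simp only [iterNbhd] at hb
        rw [Set.mem_sUnion] at hb
        obtain ⟨Y', hY'prop, hbY'⟩ := hb
        simp only [Set.mem_setOf_eq] at hY'prop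
        obtain ⟨hY'mem, u, huY', z, hzN, huz⟩ := hY'prop
        rw [Set.mem_iUnion] at hY'mem
        obtain ⟨i', hY'i⟩ := hY'mem
        obtain ⟨V'', hV'', a'', ha'', rfl⟩ := hY'i
        have hV''mem : V'' ∈ ⋃ i, 𝒱 i := Set.mem_iUnion.2 ⟨i', hV''⟩
        obtain ⟨hzQ, hzP⟩ := ihj hjm z hzN
        have hQuz : dist (π u) (π z) ≤ s := le_trans (quot_dist_le π hQdist u z) huz
        have huQ : dist (π u) (q0F V) ≤ B1 + (j:ℝ) * K + s := by
          have := dist_triangle (π u) (π z) (q0F V)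
          linarith
        have hbu : dist (π b) (π u) ≤ B := hB V'' hV''mem (π b) hbY'.1 (π u) huY'.1
        have hbQ : dist (π b) (q0F V) ≤ B1 + ((j:ℝ) + 1) * K := by
          have h1 := dist_triangle (π b) (π u) (q0F V)
          have hKe : ((j:ℝ)+1) * K = (j:ℝ) * K + K := by ring
          rw [hKe]
          linarith [hBsK]
        constructor
        · push_cast
          exact hbQ
        · have hz3 : dist (π ((g0F π hsurj V)⁻¹ * z)) 1 ≤ R3 :=
            hhat3 z (by linarith)
          have hu3 : dist (π ((g0F π hsurj V)⁻¹ * u)) 1 ≤ R3 :=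
            hhat3 u (by linarith)
          have hlink : (ppF π R3 ((g0F π hsurj V)⁻¹ * z))⁻¹ *
              ppF π R3 ((g0F π hsurj V)⁻¹ * u) ∈ HHF P Rst := by
            apply Subgroup.subset_closure
            refine ⟨mul_mem (inv_mem (ppF_mem_P π hGdist hsurj hQdist hker hz3))
              (ppF_mem_P π hGdist hsurj hQdist hker hu3), ?_⟩
            have h1 := ppF_norm_diff π hGdist hsurj hQdist hz3 hu3
            have h2 : dist ((g0F π hsurj V)⁻¹ * z) ((g0F π hsurj V)⁻¹ * u) = dist z u :=
              word_dist_left_inv hGdist _ z u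
            rw [h2] at h1
            have h3 : dist z u ≤ s := by rw [dist_comm]; exact huz
            rw [hRstdef]
            linarith [hR40]
          have htr : (ppF π R3 ((g0F π hsurj V)⁻¹ * u))⁻¹ *
              ppF π R3 ((g0F π hsurj V)⁻¹ * b) ∈ HHF P Rst := by
            apply htransfer V'' hV''mem a'' u b huY' hbY'
            linarith [hjK, hR3big, hB1one]
          have hcomb := mul_mem (mul_mem hzP hlink) htr
          have heq : (ppF π R3 ((g0F π hsurj V)⁻¹ * a))⁻¹ * ppF π R3 ((g0F π hsurj V)⁻¹ * z) *
              ((ppF π R3 ((g0F π hsurj V)⁻¹ * z))⁻¹ * ppF π R3 ((g0F π hsurj V)⁻¹ * u)) *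
              ((ppF π R3 ((g0F π hsurj V)⁻¹ * u))⁻¹ * ppF π R3 ((g0F π hsurj V)⁻¹ * b)) =
              (ppF π R3 ((g0F π hsurj V)⁻¹ * a))⁻¹ * ppF π R3 ((g0F π hsurj V)⁻¹ * b) := by
            group
          rwa [heq] at hcomb
    -- final counting
    have hmB1K : B1 + (m:ℝ) * K ≤ R3 := by linarith [hR3big, hs, hB1one]
    show (t.card : ℝ) ≤ C * gst (2 * (C * ρ) + (2 * R3 + 2)) + C
    rcases Finset.eq_empty_or_nonempty t with rfl | ⟨z₀, hz₀⟩
    · have hf0 : 0 ≤ gst (2 * (C * ρ) + (2 * R3 + 2)) := hgst.2.1 _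
      simp only [Finset.card_empty, Nat.cast_zero]
      nlinarith
    · have hmem0 := ht hz₀
      have hN0 : z₀ ∈ iterNbhd (⋃ i, 𝒰 i) s m (PieceF π hsurj P R1 B1 V a) := hmem0.1
      have hball0 : dist z₀ x ≤ ρ := hmem0.2
      obtain ⟨hQ0, hP0⟩ := hinv m le_rfl z₀ hN0
      have hz03 : dist (π ((g0F π hsurj V)⁻¹ * z₀)) 1 ≤ R3 := hhat3 z₀ (by linarith)
      set F : G → G × G := fun z =>
        ((ppF π R3 ((g0F π hsurj V)⁻¹ * z₀))⁻¹ * ppF π R3 ((g0F π hsurj V)⁻¹ * z),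
          tauF π R3 (π ((g0F π hsurj V)⁻¹ * z))) with hFdef
      have hFinj : Function.Injective F := by
        intro z1 z2 heq
        simp only [hFdef, Prod.mk.injEq] at heq
        obtain ⟨h1, h2⟩ := heq
        have h3 : ppF π R3 ((g0F π hsurj V)⁻¹ * z1) = ppF π R3 ((g0F π hsurj V)⁻¹ * z2) :=
          mul_left_cancel h1
        have h4 := ppF_eq π R3 ((g0F π hsurj V)⁻¹ * z1)
        have h5 := ppF_eq π R3 ((g0F π hsurj V)⁻¹ * z2)
        rw [h3, h2] at h4
        have h6 : (g0F π hsurj V)⁻¹ * z1 = (g0F π hsurj V)⁻¹ * z2 := h4.symm.trans h5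
        exact mul_left_cancel h6
      set A : Finset G := (t.image F).image Prod.fst with hAdef
      set Bf : Finset G := hfin.toFinset with hBfdef
      have hsubAB : t.image F ⊆ A ×ˢ Bf := by
        intro p hp
        obtain ⟨z, hz, rfl⟩ := Finset.mem_image.1 hp
        rw [Finset.mem_product]
        constructor
        · exact Finset.mem_image.2 ⟨F z, Finset.mem_image.2 ⟨z, hz, rfl⟩, rfl⟩
        · simp only [hFdef]
          have hzN := (ht hz).1
          have hzQ := (hinv m le_rfl z hzN).1
          have hz3 : dist (π ((g0F π hsurj V)⁻¹ * z)) 1 ≤ R3 := hhat3 z (by linarith)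
          have hτ := (tauF_spec π hGdist hsurj hQdist hz3).2
          rw [hBfdef, Set.Finite.mem_toFinset]
          rw [Metric.mem_closedBall, dist_comm]
          exact hτ
      have hAsub : ↑A ⊆ {x : G | x ∈ HHF P Rst} ∩
          Metric.closedBall 1 (2 * ρ + (2 * R3 + 2)) := by
        intro w hw
        obtain ⟨p, hp, rfl⟩ := Finset.mem_image.1 (Finset.mem_coe.1 hw)
        obtain ⟨z, hz, rfl⟩ := Finset.mem_image.1 hp
        have hzN := (ht hz).1
        obtain ⟨hzQ, hzP⟩ := hinv m le_rfl z hzN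
        have hz3 : dist (π ((g0F π hsurj V)⁻¹ * z)) 1 ≤ R3 := hhat3 z (by linarith)
        simp only [hFdef]
        constructor
        · exact coset_trans hP0 hzP
        · rw [Metric.mem_closedBall, dist_comm]
          have h1 := ppF_norm_diff π hGdist hsurj hQdist hz03 hz3
          have h2 : dist ((g0F π hsurj V)⁻¹ * z₀) ((g0F π hsurj V)⁻¹ * z) = dist z₀ z :=
            word_dist_left_inv hGdist _ z₀ z
          rw [h2] at h1
          have h3 : dist z x ≤ ρ := (ht hz).2
          have h4 : dist z₀ z ≤ 2 * ρ := by
            have := dist_triangle z₀ x z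
            rw [dist_comm x z] at this
            linarith
          linarith
      have hAcard : (A.card : ℝ) ≤ gst (2 * ρ + (2 * R3 + 2)) :=
        hgbound 1 (one_mem _) (2 * ρ + (2 * R3 + 2)) (by linarith) A hAsub
      have hchain : t.card ≤ A.card * Mb := by
        calc t.card = (t.image F).card := (Finset.card_image_of_injective t hFinj).symm
          _ ≤ (A ×ˢ Bf).card := Finset.card_le_card hsubAB
          _ = A.card * Bf.card := Finset.card_product _ _
          _ = A.card * Mb := by rw [hBfdef, ← hMbdef]
      have hMbC : (Mb:ℝ) ≤ C := by rw [hCdef]; exact le_max_left _ _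
      have hgmono : gst (2 * ρ + (2 * R3 + 2)) ≤ gst (2 * (C * ρ) + (2 * R3 + 2)) := by
        apply hgst.1 (Set.mem_Ici.2 (by linarith)) (Set.mem_Ici.2 (by nlinarith))
        nlinarith
      have hgpos := hgst.2.1 (2 * ρ + (2 * R3 + 2))
      have hfpos := hgst.2.1 (2 * (C * ρ) + (2 * R3 + 2))
      have hcast : (t.card : ℝ) ≤ (A.card : ℝ) * (Mb : ℝ) := by exact_mod_cast hchain
      have hMb0 : (0:ℝ) ≤ (Mb:ℝ) := Nat.cast_nonneg _
      calc (t.card : ℝ) ≤ (A.card : ℝ) * (Mb : ℝ) := hcast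
        _ ≤ gst (2 * ρ + (2 * R3 + 2)) * C := mul_le_mul hAcard hMbC hMb0 (by linarith)
        _ ≤ gst (2 * (C * ρ) + (2 * R3 + 2)) * C :=
            mul_le_mul_of_nonneg_right hgmono (by linarith)
        _ ≤ C * gst (2 * (C * ρ) + (2 * R3 + 2)) + C := by nlinarith
end

section
/- Let L be a finitely generated group of subexponential growth (i.e. with respect to the word metric of a finite generating set, there is a non-decreasing function g with (1/r)·log g(r) → 0 as r → ∞ such that every ball of radius r contains at most g(r) elements), and let Q be a finitely generated group of finite asymptotic dimension. Let L ≀ Q = (⊕_{q ∈ Q} L) ⋊ Q be the restricted wreath product, whose elements are pairs (φ, q) with φ : Q → L finitely supported and q ∈ Q, with multiplication (φ, q)(φ', q') = (φ · (q·φ'), q q') where (q·φ')(x) = φ'(q⁻¹x), equipped with the word metric of the finite generating set consisting of the generators of Q and the functions supported at the identity of Q taking a generator of L as value. Then asdim_se(L ≀ Q) ≤ asdim(Q). -/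
open Metric Set

section WordMetric

variable {G : Type*} [Group G] [MetricSpace G]

lemma wd_exists_list {S : Set G}
    (hgen : Subgroup.closure S = ⊤) (hd : IsWordDist G S) (g h : G) :
    ∃ l : List G, (∀ x ∈ l, x ∈ S ∨ x⁻¹ ∈ S) ∧ g * l.prod = h ∧
      (l.length : ℝ) = dist g h := by
  have hmem : g⁻¹ * h ∈ (Subgroup.closure S).toSubmonoid := by rw [hgen]; trivial
  rw [Subgroup.closure_toSubmonoid] at hmem
  obtain ⟨l0, hl0, hprod⟩ := Submonoid.exists_list_of_mem_closure hmem
  have hne : {n : ℕ | ∃ l : List G, l.length = n ∧ (∀ x ∈ l, x ∈ S ∨ x⁻¹ ∈ S) ∧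
      g * l.prod = h}.Nonempty := by
    refine ⟨l0.length, l0, rfl, ?_, ?_⟩
    · intro x hx
      rcases hl0 x hx with h1 | h1
      · exact Or.inl h1
      · exact Or.inr (Set.mem_inv.mp h1)
    · rw [hprod]; group
  obtain ⟨l, hlen, hmemS, hp⟩ := Nat.sInf_mem hne
  refine ⟨l, hmemS, hp, ?_⟩
  rw [hd g h]
  exact_mod_cast hlen

lemma wd_dist_le {S : Set G} (hd : IsWordDist G S) (g h : G) (l : List G)
    (hl : ∀ x ∈ l, x ∈ S ∨ x⁻¹ ∈ S) (hp : g * l.prod = h) :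
    dist g h ≤ (l.length : ℝ) := by
  rw [hd g h]
  have : sInf {n : ℕ | ∃ l : List G, l.length = n ∧ (∀ x ∈ l, x ∈ S ∨ x⁻¹ ∈ S) ∧
      g * l.prod = h} ≤ l.length := Nat.sInf_le ⟨l, rfl, hl, hp⟩
  exact_mod_cast this

lemma wd_ball_count [DecidableEq G] (S : Finset G)
    (hgen : Subgroup.closure (S : Set G) = ⊤) (hd : IsWordDist G (S : Set G))
    (x : G) (N : ℕ) (s : Finset G) (hs : ↑s ⊆ Metric.closedBall x (N : ℝ)) :
    s.card ≤ (S ∪ S.image (·⁻¹) ∪ {1}).card ^ N := by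
  classical
  set A : Finset G := S ∪ S.image (·⁻¹) ∪ {1} with hA
  have key : ∀ z ∈ s, ∃ l : List G, l.length = N ∧ (∀ σ ∈ l, σ ∈ A) ∧ x * l.prod = z := by
    intro z hz
    obtain ⟨l, hl, hp, hlen⟩ := wd_exists_list hgen hd x z
    have hdist : dist x z ≤ (N : ℝ) := by
      rw [dist_comm]; exact Metric.mem_closedBall.mp (hs hz)
    have hlN : l.length ≤ N := by exact_mod_cast hlen ▸ hdist
    refine ⟨l ++ List.replicate (N - l.length) 1, ?_, ?_, ?_⟩
    · simp; omega
    · intro σ hσ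
      rcases List.mem_append.mp hσ with h1 | h1
      · rcases hl σ h1 with h2 | h2
        · exact Finset.mem_union_left _ (Finset.mem_union_left _ h2)
        · refine Finset.mem_union_left _ (Finset.mem_union_right _ ?_)
          exact Finset.mem_image.mpr ⟨σ⁻¹, h2, inv_inv σ⟩
      · rw [List.eq_of_mem_replicate h1]
        exact Finset.mem_union_right _ (Finset.mem_singleton_self 1)
    · rw [List.prod_append, List.prod_replicate, one_pow, mul_one, hp]
  choose F hF1 hF2 hF3 using key
  have hcard : s.card ≤ (Fintype.piFinset (fun _ : Fin N => A)).card := by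
    apply Finset.card_le_card_of_injOn (fun z => if h : z ∈ s
      then (fun i : Fin N => (F z h).get (Fin.cast (hF1 z h).symm i)) else fun _ => 1)
    · intro z hz
      rw [Finset.mem_coe] at hz; rw [Finset.mem_coe, Fintype.mem_piFinset]
      intro i
      dsimp only
      rw [dif_pos hz]
      exact hF2 z hz _ (List.get_mem _ _)
    · intro z hz z' hz' heq
      rw [Finset.mem_coe] at hz hz'
      dsimp only at heq
      rw [dif_pos hz, dif_pos hz'] at heq
      have hll : F z hz = F z' hz' := by
        apply List.ext_get (by rw [hF1 z hz, hF1 z' hz'])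
        intro m hm1 hm2
        have hmN : m < N := by rw [← hF1 z hz]; exact hm1
        exact congrFun heq ⟨m, hmN⟩
      rw [← hF3 z hz, ← hF3 z' hz', hll]
  calc s.card ≤ _ := hcard
    _ = A.card ^ N := by simp [Fintype.card_piFinset]

end WordMetric

set_option linter.unusedSectionVars false

section Wreath

variable {L Q W : Type*} [Group L] [Group Q] [Group W] [MetricSpace W] [MetricSpace Q]
variable {e : W ≃ {φ : Q → L // (Function.mulSupport φ).Finite} × Q}
variable (hmul : ∀ w w' : W,
      ((e (w * w')).1.1 = fun x : Q => (e w).1.1 x * (e w').1.1 ((e w).2⁻¹ * x)) ∧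
      (e (w * w')).2 = (e w).2 * (e w').2)

include hmul

lemma e_one_snd : (e (1 : W)).2 = 1 := by
  have h := (hmul 1 1).2
  rw [mul_one] at h
  exact (mul_left_cancel (a := (e (1:W)).2) (by rw [← h, mul_one])).symm

lemma e_one_fst (x : Q) : (e (1 : W)).1.1 x = 1 := by
  have h := congrFun (hmul 1 1).1 x
  rw [mul_one, e_one_snd hmul, inv_one, one_mul] at h
  exact (mul_left_cancel (a := (e (1:W)).1.1 x) (by rw [← h, mul_one])).symm

lemma e_mul_snd (w w' : W) : (e (w * w')).2 = (e w).2 * (e w').2 := (hmul w w').2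

lemma e_mul_fst (w w' : W) (y : Q) :
    (e (w * w')).1.1 y = (e w).1.1 y * (e w').1.1 ((e w).2⁻¹ * y) :=
  congrFun (hmul w w').1 y

lemma e_inv_snd (w : W) : (e w⁻¹).2 = (e w).2⁻¹ := by
  have h := e_mul_snd hmul w w⁻¹
  rw [mul_inv_cancel, e_one_snd hmul] at h
  exact eq_inv_of_mul_eq_one_right h.symm

lemma e_inv_fst (w : W) (y : Q) : (e w⁻¹).1.1 y = ((e w).1.1 ((e w).2 * y))⁻¹ := by
  have h := e_mul_fst hmul w w⁻¹ ((e w).2 * y)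
  rw [mul_inv_cancel, e_one_fst hmul, inv_mul_cancel_left] at h
  exact (inv_eq_of_mul_eq_one_right h.symm).symm

variable {SL : Finset L} {SQ : Finset Q} {SW : Set W}
variable (hSW : SW = {w : W | ((∀ x : Q, (e w).1.1 x = 1) ∧ (e w).2 ∈ SQ) ∨
      ((e w).2 = 1 ∧ (e w).1.1 1 ∈ SL ∧ ∀ x : Q, x ≠ 1 → (e w).1.1 x = 1)})

include hSW

/-- Structure of generators and their inverses. -/
lemma gen_cases (σ : W) (hσ : σ ∈ SW ∨ σ⁻¹ ∈ SW) :
    ((∀ x : Q, (e σ).1.1 x = 1) ∧ ((e σ).2 ∈ SQ ∨ ((e σ).2)⁻¹ ∈ SQ)) ∨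
    ((e σ).2 = 1 ∧ ((e σ).1.1 1 ∈ SL ∨ ((e σ).1.1 1)⁻¹ ∈ SL) ∧
      ∀ x : Q, x ≠ 1 → (e σ).1.1 x = 1) := by
  rcases hσ with hσ | hσ
  · rw [hSW] at hσ
    rcases hσ with ⟨h1, h2⟩ | ⟨h1, h2, h3⟩
    · exact Or.inl ⟨h1, Or.inl h2⟩
    · exact Or.inr ⟨h1, Or.inl h2, h3⟩
  · rw [hSW] at hσ
    rcases hσ with ⟨h1, h2⟩ | ⟨h1, h2, h3⟩
    · refine Or.inl ⟨?_, Or.inr ?_⟩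
      · intro x
        have h4 := e_inv_fst hmul σ⁻¹ x
        rw [inv_inv] at h4
        rw [h4, h1, inv_one]
      · have := e_inv_snd hmul σ⁻¹
        rw [inv_inv] at this
        rw [this, inv_inv]
        exact h2
    · have hq : (e σ).2 = 1 := by
        have := e_inv_snd hmul σ⁻¹
        rw [inv_inv, h1] at this
        rw [this, inv_one]
      have hf : ∀ y : Q, (e σ).1.1 y = ((e σ⁻¹).1.1 y)⁻¹ := by
        intro y
        have := e_inv_fst hmul σ⁻¹ y
        rw [inv_inv, h1, one_mul] at this
        exact this
      refine Or.inr ⟨hq, Or.inr ?_, ?_⟩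
      · rw [hf 1, inv_inv]; exact h2
      · intro x hx
        rw [hf x, h3 x hx, inv_one]

end Wreath

section WreathWord

variable {L Q W : Type*} [Group L] [Group Q] [Group W] [MetricSpace W] [MetricSpace Q]
variable {e : W ≃ {φ : Q → L // (Function.mulSupport φ).Finite} × Q}
variable (hmul : ∀ w w' : W,
      ((e (w * w')).1.1 = fun x : Q => (e w).1.1 x * (e w').1.1 ((e w).2⁻¹ * x)) ∧
      (e (w * w')).2 = (e w).2 * (e w').2)
variable {SL : Finset L} {SQ : Finset Q} {SW : Set W}
variable (hSW : SW = {w : W | ((∀ x : Q, (e w).1.1 x = 1) ∧ (e w).2 ∈ SQ) ∨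
      ((e w).2 = 1 ∧ (e w).1.1 1 ∈ SL ∧ ∀ x : Q, x ≠ 1 → (e w).1.1 x = 1)})
variable (hQdist : IsWordDist Q (SQ : Set Q))

include hmul hSW hQdist

lemma wreath_step (w σ : W) (hσ : σ ∈ SW ∨ σ⁻¹ ∈ SW) :
    dist (e w).2 (e (w * σ)).2 ≤ 1 ∧
    (∀ y : Q, y ≠ (e w).2 → (e (w * σ)).1.1 y = (e w).1.1 y) ∧
    (∃ a : L, (a = 1 ∨ a ∈ SL ∨ a⁻¹ ∈ SL) ∧
      (e (w * σ)).1.1 ((e w).2) = (e w).1.1 ((e w).2) * a) := by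
  have hq := e_mul_snd hmul w σ
  have hf := fun y => e_mul_fst hmul w σ y
  rcases gen_cases hmul hSW σ hσ with ⟨h1, h2⟩ | ⟨h1, h2, h3⟩
  · refine ⟨?_, ?_, ?_⟩
    · rw [hq]
      have := wd_dist_le hQdist (e w).2 ((e w).2 * (e σ).2) [(e σ).2]
        (by intro x hx; rw [List.mem_singleton] at hx; subst hx
            exact h2.imp Finset.mem_coe.mpr Finset.mem_coe.mpr)
        (by simp)
      simpa using this
    · intro y _
      rw [hf y, h1, mul_one]
    · exact ⟨1, Or.inl rfl, by rw [hf, h1, mul_one]⟩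
  · refine ⟨?_, ?_, ?_⟩
    · rw [hq, h1, mul_one, dist_self]
      exact zero_le_one
    · intro y hy
      rw [hf y, h3 _ (by
        intro hcon
        apply hy
        rw [← mul_one ((e w).2), ← hcon, mul_inv_cancel_left]), mul_one]
    · refine ⟨(e σ).1.1 1, Or.inr h2, ?_⟩
      rw [hf, inv_mul_cancel]

lemma wreath_word (l : List W) (w : W) (hl : ∀ σ ∈ l, σ ∈ SW ∨ σ⁻¹ ∈ SW) :
    dist (e w).2 (e (w * l.prod)).2 ≤ (l.length : ℝ) ∧
    (∀ y : Q, (e (w * l.prod)).1.1 y ≠ (e w).1.1 y →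
      dist (e w).2 y ≤ (l.length : ℝ)) ∧
    (∀ y : Q, ∃ m : List L, m.length ≤ l.length ∧ (∀ a ∈ m, a ∈ SL ∨ a⁻¹ ∈ SL) ∧
      (e (w * l.prod)).1.1 y = (e w).1.1 y * m.prod) := by
  induction l generalizing w with
  | nil =>
    refine ⟨by simp, ?_, ?_⟩
    · intro y hy
      exact absurd (by rw [List.prod_nil, mul_one]) hy
    · intro y
      exact ⟨[], le_rfl, by simp, by rw [List.prod_nil, mul_one, List.prod_nil, mul_one]⟩
  | cons σ l' ih =>

    have hσ : σ ∈ SW ∨ σ⁻¹ ∈ SW := hl σ List.mem_cons_self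
    have hl' : ∀ τ ∈ l', τ ∈ SW ∨ τ⁻¹ ∈ SW := fun τ hτ => hl τ (List.mem_cons_of_mem σ hτ)
    have hassoc : w * (σ :: l').prod = (w * σ) * l'.prod := by
      rw [List.prod_cons, mul_assoc]
    obtain ⟨s1, s2, s3⟩ := wreath_step hmul hSW hQdist w σ hσ
    obtain ⟨i1, i2, i3⟩ := ih (w * σ) hl'
    have hlen : ((σ :: l').length : ℝ) = (l'.length : ℝ) + 1 := by
      push_cast [List.length_cons]; ring
    refine ⟨?_, ?_, ?_⟩
    · rw [hassoc, hlen]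
      calc dist (e w).2 (e (w * σ * l'.prod)).2
          ≤ dist (e w).2 (e (w * σ)).2 + dist (e (w * σ)).2 (e (w * σ * l'.prod)).2 :=
            dist_triangle _ _ _
        _ ≤ 1 + (l'.length : ℝ) := add_le_add s1 i1
        _ = (l'.length : ℝ) + 1 := by ring
    · intro y hy
      rw [hassoc] at hy
      rw [hlen]
      by_cases hcase : (e (w * σ * l'.prod)).1.1 y = (e (w * σ)).1.1 y
      · -- change happened at the first step, so y = (e w).2
        have hy2 : (e (w * σ)).1.1 y ≠ (e w).1.1 y := by rw [← hcase]; exact hy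
        have : y = (e w).2 := by
          by_contra hne
          exact hy2 (s2 y hne)
        rw [this, dist_self]
        positivity
      · have := i2 y hcase
        calc dist (e w).2 y ≤ dist (e w).2 (e (w * σ)).2 + dist (e (w * σ)).2 y :=
              dist_triangle _ _ _
          _ ≤ 1 + (l'.length : ℝ) := add_le_add s1 this
          _ = (l'.length : ℝ) + 1 := by ring
    · intro y
      rw [hassoc]
      obtain ⟨m', hm1, hm2, hm3⟩ := i3 y
      have hstep : ∃ a : L, (a = 1 ∨ a ∈ SL ∨ a⁻¹ ∈ SL) ∧
          (e (w * σ)).1.1 y = (e w).1.1 y * a := by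
        by_cases hcase : y = (e w).2
        · subst hcase; exact s3
        · exact ⟨1, Or.inl rfl, by rw [s2 y hcase, mul_one]⟩
      obtain ⟨a, ha1, ha2⟩ := hstep
      rcases ha1 with ha1 | ha1
      · refine ⟨m', le_trans hm1 (Nat.le_succ _), hm2, ?_⟩
        rw [hm3, ha2, ha1, mul_one]
      · refine ⟨a :: m', by simpa using hm1, ?_, ?_⟩
        · intro b hb
          rcases List.mem_cons.mp hb with hb | hb
          · subst hb; exact ha1
          · exact hm2 b hb
        · rw [List.prod_cons, hm3, ha2, mul_assoc]

end WreathWord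

section WreathDist

variable {L Q W : Type*} [Group L] [Group Q] [Group W] [MetricSpace W] [MetricSpace Q]
variable {e : W ≃ {φ : Q → L // (Function.mulSupport φ).Finite} × Q}
variable (hmul : ∀ w w' : W,
      ((e (w * w')).1.1 = fun x : Q => (e w).1.1 x * (e w').1.1 ((e w).2⁻¹ * x)) ∧
      (e (w * w')).2 = (e w).2 * (e w').2)
variable {SL : Finset L} {SQ : Finset Q} {SW : Set W}
variable (hSW : SW = {w : W | ((∀ x : Q, (e w).1.1 x = 1) ∧ (e w).2 ∈ SQ) ∨
      ((e w).2 = 1 ∧ (e w).1.1 1 ∈ SL ∧ ∀ x : Q, x ≠ 1 → (e w).1.1 x = 1)})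
variable (hQdist : IsWordDist Q (SQ : Set Q))
variable (hWgen : Subgroup.closure SW = ⊤) (hWdist : IsWordDist W SW)

include hmul hSW hQdist hWgen hWdist

lemma wreath_dist_snd (w w' : W) : dist (e w).2 (e w').2 ≤ dist w w' := by
  obtain ⟨l, hl, hp, hlen⟩ := wd_exists_list hWgen hWdist w w'
  rw [← hlen, ← hp]
  exact (wreath_word hmul hSW hQdist l w hl).1

lemma wreath_dist_lamp (w w' : W) (y : Q) (hy : (e w).1.1 y ≠ (e w').1.1 y) :
    dist (e w).2 y ≤ dist w w' := by
  obtain ⟨l, hl, hp, hlen⟩ := wd_exists_list hWgen hWdist w w'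
  rw [← hlen]
  exact (wreath_word hmul hSW hQdist l w hl).2.1 y (by rw [hp]; exact hy.symm)

lemma wreath_lamp_word (w w' : W) (y : Q) :
    ∃ m : List L, (m.length : ℝ) ≤ dist w w' ∧ (∀ a ∈ m, a ∈ SL ∨ a⁻¹ ∈ SL) ∧
      (e w').1.1 y = (e w).1.1 y * m.prod := by
  obtain ⟨l, hl, hp, hlen⟩ := wd_exists_list hWgen hWdist w w'
  obtain ⟨m, hm1, hm2, hm3⟩ := (wreath_word hmul hSW hQdist l w hl).2.2 y
  refine ⟨m, ?_, hm2, by rw [← hp]; exact hm3⟩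
  rw [← hlen]
  exact_mod_cast hm1

end WreathDist

section Subexp

open Filter Topology

lemma tendsto_const_div_real (c : ℝ) :
    Tendsto (fun t : ℝ => c / t) atTop (𝓝 0) := by
  simpa only [mul_zero, div_eq_mul_inv] using
    (tendsto_const_nhds : Filter.Tendsto (fun _ : ℝ => c) Filter.atTop (𝓝 c)).mul
      tendsto_inv_atTop_zero

lemma subexp_mul_pow {g : ℝ → ℝ} (hg : SubexpFun g) (M : ℕ) (hM : 1 ≤ M) :
    SubexpFun (fun t => (M : ℝ) * (max 1 (g (2 * t + 1))) ^ M) := by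
  obtain ⟨hmono, hnn, hlim⟩ := hg
  have hMpos : (0:ℝ) < M := Nat.cast_pos.mpr hM
  refine ⟨?_, ?_, ?_⟩
  · intro a ha b hb hab
    simp only [Set.mem_Ici] at ha hb
    have h1 : g (2*a+1) ≤ g (2*b+1) :=
      hmono (Set.mem_Ici.mpr (by linarith)) (Set.mem_Ici.mpr (by linarith)) (by linarith)
    have h2 : max 1 (g (2*a+1)) ≤ max 1 (g (2*b+1)) := max_le_max le_rfl h1
    have h3 : (0:ℝ) ≤ max 1 (g (2*a+1)) := le_trans zero_le_one (le_max_left _ _)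
    exact mul_le_mul_of_nonneg_left (pow_le_pow_left₀ h3 h2 M) (le_of_lt hMpos)
  · intro r
    have h3 : (0:ℝ) ≤ max 1 (g (2*r+1)) := le_trans zero_le_one (le_max_left _ _)
    positivity
  · have hmaxpos : ∀ t : ℝ, (0:ℝ) < max 1 (g (2*t+1)) :=
      fun t => lt_of_lt_of_le one_pos (le_max_left _ _)
    -- |log (g u)| / u → 0
    have habs : Tendsto (fun u : ℝ => |Real.log (g u)| / u) atTop (𝓝 0) := by
      have h0 := hlim.abs
      rw [abs_zero] at h0
      apply h0.congr'
      filter_upwards [eventually_gt_atTop (0:ℝ)] with u hu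
      rw [abs_div, abs_of_pos hu]
    -- compose with 2t+1
    have hcomp : Tendsto (fun t : ℝ => |Real.log (g (2*t+1))| / (2*t+1)) atTop (𝓝 0) := by
      apply habs.comp
      apply tendsto_atTop_add_const_right
      exact Tendsto.const_mul_atTop two_pos tendsto_id
    have hratio : Tendsto (fun t : ℝ => (2*t+1) / t) atTop (𝓝 2) := by
      have : Tendsto (fun t : ℝ => 2 + 1/t) atTop (𝓝 (2 + 0)) :=
        tendsto_const_nhds.add (tendsto_const_div_real 1)
      rw [add_zero] at this
      apply this.congr'
      filter_upwards [eventually_gt_atTop (0:ℝ)] with t ht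
      field_simp
    have hB : Tendsto (fun t : ℝ => |Real.log (g (2*t+1))| / t) atTop (𝓝 0) := by
      have := hcomp.mul hratio
      rw [zero_mul] at this
      apply this.congr'
      filter_upwards [eventually_gt_atTop (0:ℝ)] with t ht
      have h2t : (2*t+1) ≠ 0 := by positivity
      field_simp
    -- the key tendsto
    have T2 : Tendsto (fun t : ℝ => Real.log (max 1 (g (2*t+1))) / t) atTop (𝓝 0) := by
      apply tendsto_of_tendsto_of_tendsto_of_le_of_le' tendsto_const_nhds hB
      · filter_upwards [eventually_gt_atTop (0:ℝ)] with t ht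
        exact div_nonneg (Real.log_nonneg (le_max_left _ _)) (le_of_lt ht)
      · filter_upwards [eventually_gt_atTop (0:ℝ)] with t ht
        have hle : Real.log (max 1 (g (2*t+1))) ≤ |Real.log (g (2*t+1))| := by
          rcases le_or_gt 1 (g (2*t+1)) with h | h
          · rw [max_eq_right h]; exact le_abs_self _
          · rw [max_eq_left h.le, Real.log_one]; exact abs_nonneg _
        exact (div_le_div_iff_of_pos_right ht).mpr hle
    have T1 : Tendsto (fun t : ℝ => Real.log (M:ℝ) / t) atTop (𝓝 0) := tendsto_const_div_real _
    have Tfin : Tendsto (fun t : ℝ => Real.log (M:ℝ) / t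
        + (M:ℝ) * (Real.log (max 1 (g (2*t+1))) / t)) atTop (𝓝 (0 + (M:ℝ) * 0)) :=
      T1.add (T2.const_mul _)
    simp only [mul_zero, add_zero, zero_add] at Tfin
    apply Tfin.congr
    intro t
    rw [Real.log_mul (ne_of_gt hMpos) (ne_of_gt (pow_pos (hmaxpos t) M)), Real.log_pow]
    push_cast
    ring

end Subexp


/-- If `L` is a finitely generated group of subexponential growth and `Q`
is a finitely generated group of finite asymptotic dimension, then the restricted wreath
product `W = L ≀ Q` (whose elements are pairs `(φ, q)` with `φ : Q → L` finitely supported,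
with multiplication `(φ, q)(φ', q') = (φ · (q·φ'), q q')`, and with the word metric of the
generating set consisting of the generators of `Q` together with the functions supported at
the identity of `Q` with a generator of `L` as value) satisfies
`asdim_se(L ≀ Q) ≤ asdim(Q)`. -/
theorem asdim_se_wreath_le_asdim
    (L Q W : Type*) [Group L] [Group Q] [Group W] [MetricSpace W] [MetricSpace Q]
    (SL : Finset L) (hSLgen : Subgroup.closure (SL : Set L) = ⊤)
    (SQ : Finset Q) (hSQgen : Subgroup.closure (SQ : Set Q) = ⊤)
    (hQdist : IsWordDist Q (SQ : Set Q))
    (hLgrowth : ∃ g : ℝ → ℝ, SubexpFun g ∧ ∀ n : ℕ, ∀ t : Finset L,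
      (∀ l ∈ t, ∃ w : List L, w.length ≤ n ∧ (∀ x ∈ w, x ∈ SL ∨ x⁻¹ ∈ SL) ∧ w.prod = l) →
      (t.card : ℝ) ≤ g n)
    (hQfin : ∃ n : ℕ, ClassicalAsdimLE Q n)
    (e : W ≃ {φ : Q → L // (Function.mulSupport φ).Finite} × Q)
    (hmul : ∀ w w' : W,
      ((e (w * w')).1.1 = fun x : Q => (e w).1.1 x * (e w').1.1 ((e w).2⁻¹ * x)) ∧
      (e (w * w')).2 = (e w).2 * (e w').2)
    (SW : Set W)
    (hSW : SW = {w : W | ((∀ x : Q, (e w).1.1 x = 1) ∧ (e w).2 ∈ SQ) ∨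
      ((e w).2 = 1 ∧ (e w).1.1 1 ∈ SL ∧ ∀ x : Q, x ≠ 1 → (e w).1.1 x = 1)})
    (hWgen : Subgroup.closure SW = ⊤)
    (hWdist : IsWordDist W SW)
    (n : ℕ) (hQdim : ClassicalAsdimLE Q n) :
    AsdimLE seFamily W n := by
  classical
  intro r hr
  obtain ⟨g, hg, hgcount⟩ := hLgrowth
  obtain ⟨𝒱, ⟨hVcover, hVsep⟩, B0, hB⟩ := hQdim r hr
  set B : ℝ := max B0 0 with hBdef
  have hBnn : 0 ≤ B := le_max_right _ _
  have hBdiam : ∀ i, ∀ V ∈ 𝒱 i, ∀ x ∈ V, ∀ y ∈ V, dist x y ≤ B := by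
    intro i V hV x hx y hy
    exact le_trans (hB V (Set.mem_iUnion.mpr ⟨i, hV⟩) x hx y hy) (le_max_left _ _)
  set piece : Set Q → (Q → L) → Set W := fun V ψ =>
    {w : W | (e w).2 ∈ V ∧ ∀ y : Q, (∀ v ∈ V, r ≤ dist y v) → (e w).1.1 y = ψ y}
    with hpiece
  refine ⟨fun i => {S : Set W | ∃ V ∈ 𝒱 i, ∃ ψ : Q → L, S = piece V ψ}, ⟨?_, ?_⟩, ?_⟩
  · -- cover
    intro w
    obtain ⟨i, V, hV, hq⟩ := hVcover (e w).2
    exact ⟨i, piece V ((e w).1.1), ⟨V, hV, (e w).1.1, rfl⟩, hq, fun y _ => rfl⟩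
  · -- separation
    intro i U hU U' hU' hne w hw w' hw'
    obtain ⟨V, hV, ψ, rfl⟩ := hU
    obtain ⟨V', hV', ψ', rfl⟩ := hU'
    by_contra hlt
    rw [not_le] at hlt
    obtain ⟨hwq, hwf⟩ := hw
    obtain ⟨hwq', hwf'⟩ := hw'
    have hdQ : dist (e w).2 (e w').2 ≤ dist w w' :=
      wreath_dist_snd hmul hSW hQdist hWgen hWdist w w'
    have hVV : V = V' := by
      by_contra hVne
      have := hVsep i V hV V' hV' hVne (e w).2 hwq (e w').2 hwq'
      linarith
    subst hVV
    apply hne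
    have hpsi : ∀ y : Q, (∀ v ∈ V, r ≤ dist y v) → ψ y = ψ' y := by
      intro y hy
      by_contra hne2
      have hfne : (e w).1.1 y ≠ (e w').1.1 y := by
        rw [hwf y hy, hwf' y hy]; exact hne2
      have h1 := wreath_dist_lamp hmul hSW hQdist hWgen hWdist w w' y hfne
      have h2 := hy (e w).2 hwq
      rw [dist_comm] at h2
      linarith
    ext w2
    simp only [hpiece, Set.mem_setOf_eq]
    constructor
    · rintro ⟨h1, h2⟩
      exact ⟨h1, fun y hy => by rw [h2 y hy]; exact hpsi y hy⟩
    · rintro ⟨h1, h2⟩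
      exact ⟨h1, fun y hy => by rw [h2 y hy]; exact (hpsi y hy).symm⟩
  · -- growth
    set A : Finset Q := SQ ∪ SQ.image (·⁻¹) ∪ {1} with hAdef
    have hk1 : 1 ≤ A.card := Finset.card_pos.mpr ⟨1, by simp [hAdef]⟩
    set NB : ℕ := ⌈r + B⌉₊ with hNBdef
    set M : ℕ := A.card ^ NB with hMdef
    have hM1 : 1 ≤ M := Nat.one_le_iff_ne_zero.mpr (pow_ne_zero _ (by omega))
    refine ⟨fun t => (M : ℝ) * (max 1 (g (2 * t + 1))) ^ M,
      subexp_mul_pow hg M hM1, 1, le_rfl, ?_⟩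
    intro U hU x t ht s hs
    rw [Set.mem_iUnion] at hU
    obtain ⟨i, hU⟩ := hU
    obtain ⟨V, hV, ψ, rfl⟩ := hU
    have hmax0 : (0:ℝ) ≤ max 1 (g (2 * (1*t) + 1)) := le_trans zero_le_one (le_max_left _ _)
    rcases s.eq_empty_or_nonempty with hse | ⟨w0, hw0⟩
    · subst hse
      simp only [Finset.card_empty, Nat.cast_zero]
      have h0 : (0:ℝ) ≤ (M:ℝ) * (max 1 (g (2 * (1*t) + 1)))^M :=
        mul_nonneg (Nat.cast_nonneg _) (pow_nonneg hmax0 _)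
      linarith
    · have hsub : ∀ w ∈ s, w ∈ piece V ψ ∧ dist w x ≤ t := by
        intro w hw
        have h1 := hs (Finset.mem_coe.mpr hw)
        exact ⟨h1.1, Metric.mem_closedBall.mp h1.2⟩
      have hq0 : (e w0).2 ∈ V := (hsub w0 hw0).1.1
      have hdist2t : ∀ w ∈ s, dist w0 w ≤ 2 * t := by
        intro w hw
        calc dist w0 w ≤ dist w0 x + dist x w := dist_triangle _ _ _
          _ ≤ t + t := add_le_add (hsub w0 hw0).2 (by rw [dist_comm]; exact (hsub w hw).2)
          _ = 2 * t := by ring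
      set D : Finset Q := s.biUnion (fun w => ((e w).1.2).toFinset) with hD
      set c : Q → Finset L := fun y => s.image (fun w => (e w).1.1 y) with hc
      have hinj : s.card ≤ ((s.image (fun w => (e w).2)) ×ˢ
          Fintype.piFinset (fun y : ↥D => c ↑y)).card := by
        apply Finset.card_le_card_of_injOn (fun w => ((e w).2, fun y : ↥D => (e w).1.1 ↑y))
        · intro w hw
          rw [Finset.mem_coe, Finset.mem_product]
          refine ⟨Finset.mem_image_of_mem _ hw, ?_⟩
          rw [Fintype.mem_piFinset]
          intro y
          exact Finset.mem_image_of_mem _ hw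
        · intro w hw w' hw' heq
          rw [Finset.mem_coe] at hw hw'
          simp only [Prod.mk.injEq] at heq
          obtain ⟨hq, hfun⟩ := heq
          refine e.injective (Prod.ext (Subtype.ext (funext fun y => ?_)) hq)
          by_cases hyD : y ∈ D
          · exact congrFun hfun ⟨y, hyD⟩
          · have h1 : (e w).1.1 y = 1 := by
              by_contra hne1
              exact hyD (Finset.mem_biUnion.mpr ⟨w, hw, (Set.Finite.mem_toFinset _).mpr hne1⟩)
            have h2 : (e w').1.1 y = 1 := by
              by_contra hne1
              exact hyD (Finset.mem_biUnion.mpr ⟨w', hw', (Set.Finite.mem_toFinset _).mpr hne1⟩)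
            rw [h1, h2]
      have hQcard : (s.image (fun w => (e w).2)).card ≤ M := by
        apply wd_ball_count SQ hSQgen hQdist (e w0).2 NB
        intro z hz
        obtain ⟨w, hw, rfl⟩ := Finset.mem_image.mp (Finset.mem_coe.mp hz)
        rw [Metric.mem_closedBall]
        calc dist (e w).2 (e w0).2 ≤ B := hBdiam i V hV (e w).2 ((hsub w hw).1.1) (e w0).2 hq0
          _ ≤ r + B := by linarith
          _ ≤ (NB : ℝ) := Nat.le_ceil _
      have hG1 : (1:ℝ) ≤ max 1 (g (2*t+1)) := le_max_left _ _
      have hcall : ∀ y : Q, ((c y).card : ℝ) ≤ max 1 (g (2*t+1)) := by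
        intro y
        have hinj2 : (c y).card = ((c y).image (fun a => ((e w0).1.1 y)⁻¹ * a)).card :=
          (Finset.card_image_of_injective _ (mul_right_injective _)).symm
        rw [hinj2]
        have hbound := hgcount ⌊2*t⌋₊ ((c y).image (fun a => ((e w0).1.1 y)⁻¹ * a)) ?_
        · refine le_trans hbound (le_trans ?_ (le_max_right _ _))
          exact hg.1 (Set.mem_Ici.mpr (Nat.cast_nonneg _)) (Set.mem_Ici.mpr (by linarith))
            (le_trans (Nat.floor_le (by linarith)) (by linarith))
        · intro b hb
          obtain ⟨a, ha, rfl⟩ := Finset.mem_image.mp hb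
          obtain ⟨w, hw, rfl⟩ := Finset.mem_image.mp ha
          obtain ⟨m, hm1, hm2, hm3⟩ := wreath_lamp_word hmul hSW hQdist hWgen hWdist w0 w y
          refine ⟨m, ?_, hm2, ?_⟩
          · exact Nat.le_floor (le_trans hm1 (hdist2t w hw))
          · rw [hm3, inv_mul_cancel_left]
      have hcout : ∀ y : Q, (∀ v ∈ V, r ≤ dist y v) → (c y).card ≤ 1 := by
        intro y hy
        apply Finset.card_le_one.mpr
        intro a ha b hb
        obtain ⟨w, hw, rfl⟩ := Finset.mem_image.mp ha
        obtain ⟨w', hw', rfl⟩ := Finset.mem_image.mp hb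
        rw [(hsub w hw).1.2 y hy, (hsub w' hw').1.2 y hy]
      set P : Q → Prop := fun y => ∃ v ∈ V, dist y v < r with hPdef
      have hfilter : (D.filter P).card ≤ M := by
        apply wd_ball_count SQ hSQgen hQdist (e w0).2 NB
        intro z hz
        obtain ⟨hzD, v, hv, hvd⟩ := Finset.mem_filter.mp (Finset.mem_coe.mp hz)
        rw [Metric.mem_closedBall]
        have h1 : dist v (e w0).2 ≤ B := hBdiam i V hV v hv (e w0).2 hq0
        calc dist z (e w0).2 ≤ dist z v + dist v (e w0).2 := dist_triangle _ _ _
          _ ≤ r + B := by linarith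
          _ ≤ (NB : ℝ) := Nat.le_ceil _
      have hprod : ((∏ y : ↥D, (c ↑y).card : ℕ) : ℝ) ≤ (max 1 (g (2*t+1)))^M := by
        push_cast
        have h1 : (∏ y : ↥D, ((c ↑y).card : ℝ)) = ∏ y ∈ D, ((c y).card : ℝ) := by
          rw [Finset.univ_eq_attach]
          exact Finset.prod_attach D (fun y => ((c y).card : ℝ))
        rw [h1, ← Finset.prod_filter_mul_prod_filter_not D P]
        have h2 : (∏ y ∈ D.filter P, ((c y).card : ℝ)) ≤
            (max 1 (g (2*t+1)))^(D.filter P).card := by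
          rw [← Finset.prod_const]
          apply Finset.prod_le_prod
          · intro y _; positivity
          · intro y _; exact hcall y
        have h3 : (∏ y ∈ D.filter (fun y => ¬ P y), ((c y).card : ℝ)) ≤ 1 := by
          apply Finset.prod_le_one
          · intro y _; positivity
          · intro y hy
            have hyP : ¬ P y := (Finset.mem_filter.mp hy).2
            have hyout : ∀ v ∈ V, r ≤ dist y v := by
              intro v hv
              by_contra hcon
              exact hyP ⟨v, hv, not_le.mp hcon⟩
            exact_mod_cast hcout y hyout
        have h4 : (0:ℝ) ≤ ∏ y ∈ D.filter P, ((c y).card : ℝ) :=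
          Finset.prod_nonneg (fun y _ => by positivity)
        calc (∏ y ∈ D.filter P, ((c y).card : ℝ)) *
              (∏ y ∈ D.filter (fun y => ¬ P y), ((c y).card : ℝ))
            ≤ (max 1 (g (2*t+1)))^(D.filter P).card * 1 := by
              apply mul_le_mul h2 h3 (Finset.prod_nonneg (fun y _ => by positivity))
                (pow_nonneg (by positivity) _)
          _ = (max 1 (g (2*t+1)))^(D.filter P).card := mul_one _
          _ ≤ (max 1 (g (2*t+1)))^M := pow_le_pow_right₀ hG1 hfilter
      have hfinal : (s.card : ℝ) ≤ (M:ℝ) * (max 1 (g (2*t+1)))^M := by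
        have h1 : (s.card : ℝ) ≤ ((s.image (fun w => (e w).2)).card : ℝ) *
            ((∏ y : ↥D, (c ↑y).card : ℕ) : ℝ) := by
          have h2 := hinj
          rw [Finset.card_product, Fintype.card_piFinset] at h2
          exact_mod_cast h2
        have hA' : ((s.image (fun w => (e w).2)).card : ℝ) ≤ (M:ℝ) := by
          exact_mod_cast hQcard
        have hprodnn : (0:ℝ) ≤ ((∏ y : ↥D, (c ↑y).card : ℕ) : ℝ) := Nat.cast_nonneg _
        exact le_trans h1 (mul_le_mul hA' hprod hprodnn (Nat.cast_nonneg _))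
      simp only [one_mul]
      linarith
end
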